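/- arXiv:gr-qc/0512070 — 7 statements merged into one kernel-verified Lean document; each statement's English description precedes it below -/
import Mathlib

section
/- (Cosmic no-hair) Let 0 < γ < 2/3. Then every type VIII solution of the tilted Bianchi type VIII dynamical system defined on [τ₀, ∞) with Ω(τ) > 0 and V(τ)² < 1 for all τ satisfies Ω(τ) → 1 and V(τ) → 0 as τ → ∞. -/
noncomputable section

open Complex Filter

/-- State of the tilted Bianchi type VIII dynamical system (F-gauge):
real variables `Sp`, `Nb` (= N̄), `N1`, `Om`, `v1` and complex variables
`Sx` (= Σ×), `S1`, `Nx` (= N×), `v`, all functions of the dynamical time τ. -/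
structure BianchiVIII (γ : ℝ) (I : Set ℝ) where
  Sp : ℝ → ℝ
  Sx : ℝ → ℂ
  S1 : ℝ → ℂ
  Nx : ℝ → ℂ
  Nb : ℝ → ℝ
  N1 : ℝ → ℝ
  Om : ℝ → ℝ
  v1 : ℝ → ℝ
  v : ℝ → ℂ

namespace BianchiVIII

variable {γ : ℝ} {I : Set ℝ}

/-- Σ² = Σ₊² + |Σ×|² + |Σ₁|² -/
def Sig2 (S : BianchiVIII γ I) (τ : ℝ) : ℝ :=
  S.Sp τ ^ 2 + ‖S.Sx τ‖ ^ 2 + ‖S.S1 τ‖ ^ 2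

/-- V² = v₁² + |v|² -/
def V2 (S : BianchiVIII γ I) (τ : ℝ) : ℝ :=
  S.v1 τ ^ 2 + ‖S.v τ‖ ^ 2

/-- The tilt speed V = √(V²). -/
def V (S : BianchiVIII γ I) (τ : ℝ) : ℝ := Real.sqrt (S.V2 τ)

/-- G₊ = 1 + (γ−1)V² -/
def Gp (S : BianchiVIII γ I) (τ : ℝ) : ℝ := 1 + (γ - 1) * S.V2 τ

/-- Deceleration parameter q = 2Σ² + (1/2)((3γ−2)+(2−γ)V²)Om/G₊ -/
def q (S : BianchiVIII γ I) (τ : ℝ) : ℝ :=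
  2 * S.Sig2 τ + (1/2) * ((3*γ - 2) + (2 - γ) * S.V2 τ) * S.Om τ / S.Gp τ

/-- W = V²𝒮 = Σ₊(−2v₁² + |v|²) + 2√3 v₁ Re(conj(Σ₁) v) + √3 Re(Σ× conj(v)²) -/
def W (S : BianchiVIII γ I) (τ : ℝ) : ℝ :=
  S.Sp τ * (-2 * S.v1 τ ^ 2 + ‖S.v τ‖ ^ 2)
    + 2 * Real.sqrt 3 * S.v1 τ * ((starRingEnd ℂ) (S.S1 τ) * S.v τ).re
    + Real.sqrt 3 * (S.Sx τ * ((starRingEnd ℂ) (S.v τ)) ^ 2).re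

/-- T = ((3γ−4)(1−V²) + (2−γ)W)/(1−(γ−1)V²) -/
def T (S : BianchiVIII γ I) (τ : ℝ) : ℝ :=
  ((3*γ - 4) * (1 - S.V2 τ) + (2 - γ) * S.W τ) / (1 - (γ - 1) * S.V2 τ)

/-- a = (N̄²−N₁²−|N×|²)/((N̄−N₁)²−|N×|²) -/
def a (S : BianchiVIII γ I) (τ : ℝ) : ℝ :=
  (S.Nb τ ^ 2 - S.N1 τ ^ 2 - ‖S.Nx τ‖ ^ 2) /
    ((S.Nb τ - S.N1 τ) ^ 2 - ‖S.Nx τ‖ ^ 2)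

/-- b = −2N₁N×/((N̄−N₁)²−|N×|²) -/
def b (S : BianchiVIII γ I) (τ : ℝ) : ℂ :=
  ((-2 * S.N1 τ : ℝ) : ℂ) * S.Nx τ /
    (((S.Nb τ - S.N1 τ) ^ 2 - ‖S.Nx τ‖ ^ 2 : ℝ) : ℂ)

/-- R = aΣ₁ + b·conj(Σ₁) -/
def R (S : BianchiVIII γ I) (τ : ℝ) : ℂ :=
  (S.a τ : ℂ) * S.S1 τ + S.b τ * (starRingEnd ℂ) (S.S1 τ)

/-- The evolution equations and the constraints of the tilted Bianchi
type VIII dynamical system, holding at each τ in the interval `I`. -/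
structure IsSolution (S : BianchiVIII γ I) : Prop where
  hSp : ∀ τ ∈ I, HasDerivAt S.Sp
    ((S.q τ - 2) * S.Sp τ + 3 * ((starRingEnd ℂ) (S.R τ) * S.S1 τ).re
      - S.N1 τ * S.Nb τ - 2 * ‖S.Nx τ‖ ^ 2
      + γ * S.Om τ / (2 * S.Gp τ) * (-2 * S.v1 τ ^ 2 + ‖S.v τ‖ ^ 2)) τ
  hSx : ∀ τ ∈ I, HasDerivAt S.Sx
    (((S.q τ - 2 : ℝ) : ℂ) * S.Sx τ + (Real.sqrt 3 : ℂ) * S.S1 τ * S.R τ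
      - (Real.sqrt 3 : ℂ) * S.Nx τ * ((2 * S.Nb τ - S.N1 τ : ℝ) : ℂ)
      + ((Real.sqrt 3 * γ * S.Om τ / (2 * S.Gp τ) : ℝ) : ℂ) * (S.v τ) ^ 2) τ
  hS1 : ∀ τ ∈ I, HasDerivAt S.S1
    (((S.q τ - 2 : ℝ) : ℂ) * S.S1 τ - ((3 * S.Sp τ : ℝ) : ℂ) * S.R τ
      - (Real.sqrt 3 : ℂ) * S.Sx τ * (starRingEnd ℂ) (S.R τ)
      + ((Real.sqrt 3 * γ * S.Om τ * S.v1 τ / S.Gp τ : ℝ) : ℂ) * S.v τ) τ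
  hNx : ∀ τ ∈ I, HasDerivAt S.Nx
    (((S.q τ + 2 * S.Sp τ : ℝ) : ℂ) * S.Nx τ
      + ((2 * Real.sqrt 3 : ℝ) : ℂ) * S.Sx τ * ((S.Nb τ : ℝ) : ℂ)) τ
  hNb : ∀ τ ∈ I, HasDerivAt S.Nb
    ((S.q τ + 2 * S.Sp τ) * S.Nb τ
      + 2 * Real.sqrt 3 * ((starRingEnd ℂ) (S.Sx τ) * S.Nx τ).re) τ
  hN1 : ∀ τ ∈ I, HasDerivAt S.N1 ((S.q τ - 4 * S.Sp τ) * S.N1 τ) τ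
  hOm : ∀ τ ∈ I, HasDerivAt S.Om
    (S.Om τ / S.Gp τ * (2 * S.q τ - (3*γ - 2)
      + (2 * S.q τ * (γ - 1) - (2 - γ)) * S.V2 τ - γ * S.W τ)) τ
  hv1 : ∀ τ ∈ I, HasDerivAt S.v1
    ((S.T τ + 2 * S.Sp τ) * S.v1 τ
      - Real.sqrt 3 * ((S.R τ + S.S1 τ) * (starRingEnd ℂ) (S.v τ)).re
      + Real.sqrt 3 * ((starRingEnd ℂ) (S.Nx τ) * (S.v τ) ^ 2).im) τ
  hv : ∀ τ ∈ I, HasDerivAt S.v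
    ((((S.T τ - S.Sp τ : ℝ) : ℂ)
        - Complex.I * (Real.sqrt 3 : ℂ) * ((S.Nb τ - S.N1 τ : ℝ) : ℂ) * (S.v1 τ : ℂ)) * S.v τ
      - (Real.sqrt 3 : ℂ) * (S.Sx τ + Complex.I * S.Nx τ * (S.v1 τ : ℂ)) * (starRingEnd ℂ) (S.v τ)
      - (Real.sqrt 3 : ℂ) * (S.S1 τ - S.R τ) * (S.v1 τ : ℂ)) τ
  hC1 : ∀ τ ∈ I, 1 = S.Sig2 τ + (1/4) * S.N1 τ ^ 2 - S.N1 τ * S.Nb τ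
      + ‖S.Nx τ‖ ^ 2 + S.Om τ
  hC2 : ∀ τ ∈ I, 0 = 2 * ((starRingEnd ℂ) (S.Sx τ) * S.Nx τ).im
      + γ * S.Om τ * S.v1 τ / S.Gp τ
  hC3 : ∀ τ ∈ I, (0 : ℂ) = Complex.I * S.S1 τ * ((S.Nb τ - S.N1 τ : ℝ) : ℂ)
      + Complex.I * (starRingEnd ℂ) (S.S1 τ) * S.Nx τ
      + ((γ * S.Om τ / S.Gp τ : ℝ) : ℂ) * S.v τ

/-- Type VIII conditions: N₁ < 0, N̄ > 0, N̄² − |N×|² > 0, Om ≥ 0, V² < 1. -/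
def IsTypeVIII (S : BianchiVIII γ I) : Prop :=
  ∀ τ ∈ I, S.N1 τ < 0 ∧ 0 < S.Nb τ ∧ 0 < S.Nb τ ^ 2 - ‖S.Nx τ‖ ^ 2
    ∧ 0 ≤ S.Om τ ∧ S.V2 τ < 1

/-- D = N₁v₁² + N̄|v|² + Re(conj(N×) v²) -/
def D (S : BianchiVIII γ I) (τ : ℝ) : ℝ :=
  S.N1 τ * S.v1 τ ^ 2 + S.Nb τ * ‖S.v τ‖ ^ 2
    + ((starRingEnd ℂ) (S.Nx τ) * (S.v τ) ^ 2).re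

end BianchiVIII

/-- Weighted Cauchy-Schwarz with weights (1,1,1,2,2,2), via Lagrange identity. -/
lemma cs6 (a1 a2 a3 a4 a5 a6 b1 b2 b3 b4 b5 b6 : ℝ) :
    (a1*b1 + a2*b2 + a3*b3 + 2*(a4*b4) + 2*(a5*b5) + 2*(a6*b6))^2 ≤
    (a1^2 + a2^2 + a3^2 + 2*a4^2 + 2*a5^2 + 2*a6^2) *
    (b1^2 + b2^2 + b3^2 + 2*b4^2 + 2*b5^2 + 2*b6^2) := by
  have key : (a1^2 + a2^2 + a3^2 + 2*a4^2 + 2*a5^2 + 2*a6^2) *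
      (b1^2 + b2^2 + b3^2 + 2*b4^2 + 2*b5^2 + 2*b6^2)
      - (a1*b1 + a2*b2 + a3*b3 + 2*(a4*b4) + 2*(a5*b5) + 2*(a6*b6))^2
      = (a1*b2 - a2*b1)^2 + (a1*b3 - a3*b1)^2 + (a2*b3 - a3*b2)^2
        + 2*((a1*b4 - a4*b1)^2 + (a1*b5 - a5*b1)^2 + (a1*b6 - a6*b1)^2
          + (a2*b4 - a4*b2)^2 + (a2*b5 - a5*b2)^2 + (a2*b6 - a6*b2)^2
          + (a3*b4 - a4*b3)^2 + (a3*b5 - a5*b3)^2 + (a3*b6 - a6*b3)^2)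
        + 4*((a4*b5 - a5*b4)^2 + (a4*b6 - a6*b4)^2 + (a5*b6 - a6*b5)^2) := by
    ring
  nlinarith [key, sq_nonneg (a1*b2 - a2*b1), sq_nonneg (a1*b3 - a3*b1), sq_nonneg (a2*b3 - a3*b2),
    sq_nonneg (a1*b4 - a4*b1), sq_nonneg (a1*b5 - a5*b1), sq_nonneg (a1*b6 - a6*b1),
    sq_nonneg (a2*b4 - a4*b2), sq_nonneg (a2*b5 - a5*b2), sq_nonneg (a2*b6 - a6*b2),
    sq_nonneg (a3*b4 - a4*b3), sq_nonneg (a3*b5 - a5*b3), sq_nonneg (a3*b6 - a6*b3),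
    sq_nonneg (a4*b5 - a5*b4), sq_nonneg (a4*b6 - a6*b4), sq_nonneg (a5*b6 - a6*b5)]

/-- Bound on the shear quadratic form: W² ≤ 4 Σ² (V²)². -/
lemma Wsq_bound (p s1r s1i sxr sxi v1 x y : ℝ) :
    (p*(-2*v1^2+(x^2+y^2)) + 2*Real.sqrt 3*v1*(s1r*x+s1i*y)
      + Real.sqrt 3*(sxr*(x^2-y^2)+sxi*(2*(x*y))))^2
    ≤ 4*(p^2+(s1r^2+s1i^2)+(sxr^2+sxi^2))*(v1^2+(x^2+y^2))^2 := by
  have hr : Real.sqrt 3 ^ 2 = 3 := Real.sq_sqrt (by norm_num)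
  set r := Real.sqrt 3 with hrdef
  set t := v1^2 + (x^2+y^2) with ht
  have h := cs6 (-2*p) (p + r*sxr) (p - r*sxr) (r*s1r) (r*s1i) (r*sxi)
    (v1^2 - t/3) (x^2 - t/3) (y^2 - t/3) (v1*x) (v1*y) (x*y)
  have e1 : (-2*p)*(v1^2 - t/3) + (p + r*sxr)*(x^2 - t/3) + (p - r*sxr)*(y^2 - t/3)
      + 2*((r*s1r)*(v1*x)) + 2*((r*s1i)*(v1*y)) + 2*((r*sxi)*(x*y))
      = p*(-2*v1^2+(x^2+y^2)) + 2*r*v1*(s1r*x+s1i*y) + r*(sxr*(x^2-y^2)+sxi*(2*(x*y))) := by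
    rw [ht]; ring
  have e2 : ((-2*p)^2 + (p + r*sxr)^2 + (p - r*sxr)^2 + 2*(r*s1r)^2 + 2*(r*s1i)^2 + 2*(r*sxi)^2)
      = 6*(p^2+(s1r^2+s1i^2)+(sxr^2+sxi^2)) := by
    linear_combination (2*sxr^2 + 2*s1r^2 + 2*s1i^2 + 2*sxi^2) * hr
  have e3 : ((v1^2 - t/3)^2 + (x^2 - t/3)^2 + (y^2 - t/3)^2 + 2*(v1*x)^2 + 2*(v1*y)^2 + 2*(x*y)^2)
      = (2/3)*t^2 := by
    rw [ht]; ring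
  rw [e1, e2, e3] at h
  calc _ ≤ 6*(p^2+(s1r^2+s1i^2)+(sxr^2+sxi^2)) * ((2/3)*t^2) := h
    _ = 4*(p^2+(s1r^2+s1i^2)+(sxr^2+sxi^2))*t^2 := by ring


lemma exp_decay (f f' : ℝ → ℝ) (τ₁ a C lam : ℝ) (hlam : 0 < lam) (hla : lam < a) (hC : 0 ≤ C)
    (hf : ∀ τ ∈ Set.Ici τ₁, HasDerivAt f (f' τ) τ)
    (hb : ∀ τ ∈ Set.Ici τ₁, f' τ ≤ -a * f τ + C * Real.exp (-lam * (τ - τ₁)))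
    (hpos : ∀ τ ∈ Set.Ici τ₁, 0 ≤ f τ) :
    ∀ τ ∈ Set.Ici τ₁, f τ ≤ (f τ₁ + C/(a-lam)) * Real.exp (-lam * (τ - τ₁)) := by
  set C' := C/(a-lam) with hC'
  have hC'0 : 0 ≤ C' := div_nonneg hC (by linarith)
  set g : ℝ → ℝ := fun τ => f τ * Real.exp (a*(τ-τ₁)) - C' * Real.exp ((a-lam)*(τ-τ₁)) with hg
  have hgd : ∀ τ ∈ Set.Ici τ₁, HasDerivAt g
      ((f' τ + a * f τ) * Real.exp (a*(τ-τ₁)) - C * Real.exp ((a-lam)*(τ-τ₁))) τ := by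
    intro τ hτ
    have h1 : HasDerivAt (fun τ => Real.exp (a*(τ-τ₁))) (a * Real.exp (a*(τ-τ₁))) τ := by
      have : HasDerivAt (fun τ : ℝ => a*(τ-τ₁)) a τ := by
        simpa using ((hasDerivAt_id τ).sub_const τ₁).const_mul a
      convert this.exp using 1; ring
    have h2 : HasDerivAt (fun τ => Real.exp ((a-lam)*(τ-τ₁))) ((a-lam) * Real.exp ((a-lam)*(τ-τ₁))) τ := by
      have : HasDerivAt (fun τ : ℝ => (a-lam)*(τ-τ₁)) (a-lam) τ := by
        simpa using ((hasDerivAt_id τ).sub_const τ₁).const_mul (a-lam)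
      convert this.exp using 1; ring
    have := ((hf τ hτ).mul h1).sub (h2.const_mul C')
    refine this.congr_deriv ?_
    have hne : a - lam ≠ 0 := by linarith
    rw [hC']
    field_simp
  have hg' : ∀ τ ∈ interior (Set.Ici τ₁), deriv g τ ≤ 0 := by
    intro τ hτ
    rw [interior_Ici] at hτ
    have hτ' : τ ∈ Set.Ici τ₁ := Set.Ioi_subset_Ici_self hτ
    rw [(hgd τ hτ').deriv]
    have hb' := hb τ hτ'
    have e1 : Real.exp (-lam * (τ - τ₁)) * Real.exp (a*(τ-τ₁)) = Real.exp ((a-lam)*(τ-τ₁)) := by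
      rw [← Real.exp_add]; ring_nf
    have hexp : (0:ℝ) < Real.exp (a*(τ-τ₁)) := Real.exp_pos _
    nlinarith [Real.exp_pos ((a-lam)*(τ-τ₁))]
  have hanti : AntitoneOn g (Set.Ici τ₁) := by
    apply antitoneOn_of_deriv_nonpos (convex_Ici τ₁)
    · intro τ hτ; exact (hgd τ hτ).continuousAt.continuousWithinAt
    · intro τ hτ; rw [interior_Ici] at hτ
      exact ((hgd τ (Set.Ioi_subset_Ici_self hτ)).differentiableAt).differentiableWithinAt
    · exact hg'
  intro τ hτ
  have hgτ : g τ ≤ g τ₁ := hanti Set.self_mem_Ici hτ hτ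
  have hgτ₁ : g τ₁ = f τ₁ - C' := by simp [hg]
  rw [hgτ₁] at hgτ
  -- g τ = f τ * e^{aΔ} - C' e^{(a-lam)Δ} ≤ f τ₁ - C'
  have hΔ : 0 ≤ τ - τ₁ := by simpa using hτ
  have hea : (0:ℝ) < Real.exp (a*(τ-τ₁)) := Real.exp_pos _
  have key : f τ ≤ (f τ₁ - C') * Real.exp (-a*(τ-τ₁)) + C' * Real.exp (-lam*(τ-τ₁)) := by
    have e2 : Real.exp ((a-lam)*(τ-τ₁)) * Real.exp (-a*(τ-τ₁)) = Real.exp (-lam*(τ-τ₁)) := by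
      rw [← Real.exp_add]; ring_nf
    have e3 : Real.exp (a*(τ-τ₁)) * Real.exp (-a*(τ-τ₁)) = 1 := by
      rw [← Real.exp_add]; simp
    have h4 : (f τ * Real.exp (a*(τ-τ₁)) - C' * Real.exp ((a-lam)*(τ-τ₁))) * Real.exp (-a*(τ-τ₁))
        ≤ (f τ₁ - C') * Real.exp (-a*(τ-τ₁)) := by
      apply mul_le_mul_of_nonneg_right hgτ (Real.exp_pos _).le
    calc f τ = (f τ * Real.exp (a*(τ-τ₁)) - C' * Real.exp ((a-lam)*(τ-τ₁))) * Real.exp (-a*(τ-τ₁))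
          + C' * Real.exp (-lam*(τ-τ₁)) := by
          rw [sub_mul, mul_assoc, e3, mul_assoc, e2]; ring
      _ ≤ (f τ₁ - C') * Real.exp (-a*(τ-τ₁)) + C' * Real.exp (-lam*(τ-τ₁)) := by linarith
  have hee : Real.exp (-a*(τ-τ₁)) ≤ Real.exp (-lam*(τ-τ₁)) := by
    apply Real.exp_le_exp.mpr; nlinarith
  rcases le_or_gt (f τ₁ - C') 0 with hcase | hcase
  · have : (f τ₁ - C') * Real.exp (-a*(τ-τ₁)) ≤ 0 :=
      mul_nonpos_of_nonpos_of_nonneg hcase (Real.exp_pos _).le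
    have h0 : 0 ≤ f τ₁ := hpos τ₁ Set.self_mem_Ici
    nlinarith [Real.exp_pos (-lam*(τ-τ₁))]
  · have : (f τ₁ - C') * Real.exp (-a*(τ-τ₁)) ≤ (f τ₁ - C') * Real.exp (-lam*(τ-τ₁)) :=
      mul_le_mul_of_nonneg_left hee hcase.le
    nlinarith [Real.exp_pos (-lam*(τ-τ₁))]

lemma tendsto_zero_of_exp_bound (f : ℝ → ℝ) (τ₁ B lam : ℝ) (hlam : 0 < lam)
    (h0 : ∀ τ ∈ Set.Ici τ₁, 0 ≤ f τ)
    (hB : ∀ τ ∈ Set.Ici τ₁, f τ ≤ B * Real.exp (-lam*(τ-τ₁))) :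
    Tendsto f atTop (nhds 0) := by
  have hev : ∀ᶠ τ in atTop, τ ∈ Set.Ici τ₁ := eventually_ge_atTop τ₁
  apply squeeze_zero' (hev.mono h0) (hev.mono hB)
  have h1 : Tendsto (fun τ : ℝ => -lam*(τ-τ₁)) atTop atBot := by
    have : Tendsto (fun τ : ℝ => τ - τ₁) atTop atTop := tendsto_atTop_add_const_right _ _ tendsto_id
    exact this.const_mul_atTop_of_neg (by linarith)
  have h2 : Tendsto (fun τ : ℝ => Real.exp (-lam*(τ-τ₁))) atTop (nhds 0) :=
    Real.tendsto_exp_atBot.comp h1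
  simpa using h2.const_mul B

namespace BianchiVIII
variable {γ : ℝ} {I : Set ℝ}

lemma alg1 (T p v1 nd r : ℝ) (R S1 Sx Nx v : ℂ) :
    2 * v1 * ((T + 2*p) * v1
      - r * ((R + S1) * (starRingEnd ℂ) v).re
      + r * ((starRingEnd ℂ) Nx * v ^ 2).im)
    + ((starRingEnd ℂ)
        ((((T - p : ℝ) : ℂ) - Complex.I * (r:ℂ) * ((nd:ℝ):ℂ) * (v1:ℂ)) * v
          - (r:ℂ) * (Sx + Complex.I * Nx * (v1:ℂ)) * (starRingEnd ℂ) v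
          - (r:ℂ) * (S1 - R) * (v1:ℂ)) * v
      + (starRingEnd ℂ) v *
        ((((T - p : ℝ) : ℂ) - Complex.I * (r:ℂ) * ((nd:ℝ):ℂ) * (v1:ℂ)) * v
          - (r:ℂ) * (Sx + Complex.I * Nx * (v1:ℂ)) * (starRingEnd ℂ) v
          - (r:ℂ) * (S1 - R) * (v1:ℂ))).re
    = 2 * (T * (v1^2 + ‖v‖ ^ 2)
      - (p * (-2 * v1^2 + ‖v‖ ^ 2)
        + 2 * r * v1 * ((starRingEnd ℂ) S1 * v).re
        + r * (Sx * ((starRingEnd ℂ) v) ^ 2).re)) := by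
  simp only [Complex.sq_norm]
  simp only [Complex.sq_norm, Complex.normSq_apply, pow_two,
    Complex.mul_re, Complex.mul_im, Complex.add_re, Complex.add_im,
    Complex.sub_re, Complex.sub_im, Complex.conj_re, Complex.conj_im,
    Complex.I_re, Complex.I_im, Complex.ofReal_re, Complex.ofReal_im]
  ring

lemma hasDerivAt_V2 (S : BianchiVIII γ I) (hsol : S.IsSolution) {τ : ℝ} (hτ : τ ∈ I) :
    HasDerivAt S.V2 (2 * (S.T τ * S.V2 τ - S.W τ)) τ := by
  have h1 := hsol.hv1 τ hτ
  have hv := hsol.hv τ hτ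
  have hsq : HasDerivAt (fun t => S.v1 t ^ 2)
      (2 * S.v1 τ * ((S.T τ + 2 * S.Sp τ) * S.v1 τ
        - Real.sqrt 3 * ((S.R τ + S.S1 τ) * (starRingEnd ℂ) (S.v τ)).re
        + Real.sqrt 3 * ((starRingEnd ℂ) (S.Nx τ) * (S.v τ) ^ 2).im)) τ := by
    refine (h1.pow 2).congr_deriv ?_
    norm_num
  have hconj : HasDerivAt (fun t => (starRingEnd ℂ) (S.v t))
      ((starRingEnd ℂ) ((((S.T τ - S.Sp τ : ℝ) : ℂ)
        - Complex.I * (Real.sqrt 3 : ℂ) * ((S.Nb τ - S.N1 τ : ℝ) : ℂ) * (S.v1 τ : ℂ)) * S.v τ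
      - (Real.sqrt 3 : ℂ) * (S.Sx τ + Complex.I * S.Nx τ * (S.v1 τ : ℂ)) * (starRingEnd ℂ) (S.v τ)
      - (Real.sqrt 3 : ℂ) * (S.S1 τ - S.R τ) * (S.v1 τ : ℂ))) τ := by
    simpa [Complex.star_def] using hv.star
  have hmul := hconj.mul hv
  have hre := (Complex.reCLM.hasFDerivAt).comp_hasDerivAt τ hmul
  have habs : HasDerivAt (fun t => ‖S.v t‖ ^ 2)
      (Complex.reCLM ((starRingEnd ℂ) ((((S.T τ - S.Sp τ : ℝ) : ℂ)
        - Complex.I * (Real.sqrt 3 : ℂ) * ((S.Nb τ - S.N1 τ : ℝ) : ℂ) * (S.v1 τ : ℂ)) * S.v τ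
      - (Real.sqrt 3 : ℂ) * (S.Sx τ + Complex.I * S.Nx τ * (S.v1 τ : ℂ)) * (starRingEnd ℂ) (S.v τ)
      - (Real.sqrt 3 : ℂ) * (S.S1 τ - S.R τ) * (S.v1 τ : ℂ)) * S.v τ
        + (starRingEnd ℂ) (S.v τ) *
          ((((S.T τ - S.Sp τ : ℝ) : ℂ)
        - Complex.I * (Real.sqrt 3 : ℂ) * ((S.Nb τ - S.N1 τ : ℝ) : ℂ) * (S.v1 τ : ℂ)) * S.v τ
      - (Real.sqrt 3 : ℂ) * (S.Sx τ + Complex.I * S.Nx τ * (S.v1 τ : ℂ)) * (starRingEnd ℂ) (S.v τ)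
      - (Real.sqrt 3 : ℂ) * (S.S1 τ - S.R τ) * (S.v1 τ : ℂ)))) τ := by
    refine HasDerivAt.congr_of_eventuallyEq hre (Filter.Eventually.of_forall fun t => ?_)
    · simp [Function.comp, Complex.sq_norm, Complex.normSq_apply, Complex.mul_re,
        Complex.conj_re, Complex.conj_im]
  have hsum := hsq.add habs
  have : S.V2 = fun t => S.v1 t ^ 2 + ‖S.v t‖ ^ 2 := rfl
  rw [this]
  refine hsum.congr_deriv ?_
  have := alg1 (S.T τ) (S.Sp τ) (S.v1 τ) (S.Nb τ - S.N1 τ) (Real.sqrt 3)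
    (S.R τ) (S.S1 τ) (S.Sx τ) (S.Nx τ) (S.v τ)
  simp only [Complex.reCLM_apply] at this ⊢
  simp only [W]
  linarith [this]

lemma V2_nonneg (S : BianchiVIII γ I) (τ : ℝ) : 0 ≤ S.V2 τ := by
  unfold V2; positivity

lemma Sig2_nonneg (S : BianchiVIII γ I) (τ : ℝ) : 0 ≤ S.Sig2 τ := by
  unfold Sig2; positivity

/-- From the Hamiltonian constraint and the type VIII conditions: Σ² + Ω ≤ 1. -/
lemma Sig2_add_Om_le_one (S : BianchiVIII γ I) (hsol : S.IsSolution) (hVIII : S.IsTypeVIII)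
    {τ : ℝ} (hτ : τ ∈ I) : S.Sig2 τ + S.Om τ ≤ 1 := by
  have hC1 := hsol.hC1 τ hτ
  obtain ⟨h1, h2, _, _, _⟩ := hVIII τ hτ
  have hK : 0 ≤ (1/4) * S.N1 τ ^ 2 - S.N1 τ * S.Nb τ + ‖S.Nx τ‖ ^ 2 := by
    nlinarith [sq_nonneg (S.N1 τ), sq_nonneg (‖S.Nx τ‖), mul_pos (neg_pos.mpr h1) h2]
  linarith

/-- |W| ≤ 2·V² when Σ² ≤ 1. -/
lemma abs_W_le (S : BianchiVIII γ I) {τ : ℝ} (hS : S.Sig2 τ ≤ 1) :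
    |S.W τ| ≤ 2 * S.V2 τ := by
  have key := Wsq_bound (S.Sp τ) ((S.S1 τ).re) ((S.S1 τ).im) ((S.Sx τ).re) ((S.Sx τ).im)
    (S.v1 τ) ((S.v τ).re) ((S.v τ).im)
  have eW : S.W τ = S.Sp τ * (-2 * S.v1 τ ^2 + ((S.v τ).re^2 + (S.v τ).im^2))
      + 2*Real.sqrt 3 * S.v1 τ * ((S.S1 τ).re * (S.v τ).re + (S.S1 τ).im * (S.v τ).im)
      + Real.sqrt 3 * ((S.Sx τ).re * ((S.v τ).re^2 - (S.v τ).im^2)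
        + (S.Sx τ).im * (2 * ((S.v τ).re * (S.v τ).im))) := by
    simp only [W, Complex.sq_norm]
    simp only [W, Complex.sq_norm, Complex.normSq_apply, pow_two,
      Complex.mul_re, Complex.mul_im, Complex.conj_re, Complex.conj_im]
    ring
  have eV : S.V2 τ = S.v1 τ ^2 + ((S.v τ).re^2 + (S.v τ).im^2) := by
    simp only [V2, Complex.sq_norm, Complex.normSq_apply]; ring
  have eS : S.Sig2 τ = S.Sp τ ^2 + (((S.S1 τ).re^2 + (S.S1 τ).im^2))
      + (((S.Sx τ).re^2 + (S.Sx τ).im^2)) := by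
    simp only [Sig2, Complex.sq_norm, Complex.normSq_apply]; ring
  have hw2 : S.W τ ^ 2 ≤ 4 * S.Sig2 τ * S.V2 τ ^ 2 := by
    rw [eW, eV, eS]; exact key
  have h4 : S.W τ ^ 2 ≤ (2 * S.V2 τ) ^ 2 := by
    nlinarith [hw2, sq_nonneg (S.V2 τ), hS, Sig2_nonneg S τ]
  calc |S.W τ| = Real.sqrt (S.W τ ^ 2) := (Real.sqrt_sq_eq_abs _).symm
    _ ≤ Real.sqrt ((2 * S.V2 τ) ^ 2) := Real.sqrt_le_sqrt h4
    _ = |2 * S.V2 τ| := Real.sqrt_sq_eq_abs _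
    _ = 2 * S.V2 τ := abs_of_nonneg (by linarith [V2_nonneg S τ])

/-- The Ω evolution term rewritten: E = Ω(4Σ²G₊ − P(1−Ω) − γW)/G₊. -/
lemma Om_deriv_eq (S : BianchiVIII γ I) {τ : ℝ} (hGp : S.Gp τ ≠ 0) :
    S.Om τ / S.Gp τ * (2 * S.q τ - (3*γ - 2)
      + (2 * S.q τ * (γ - 1) - (2 - γ)) * S.V2 τ - γ * S.W τ)
    = S.Om τ * (4 * S.Sig2 τ * S.Gp τ
        - ((3*γ - 2) + (2 - γ) * S.V2 τ) * (1 - S.Om τ) - γ * S.W τ) / S.Gp τ := by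
  have hq : S.q τ = 2 * S.Sig2 τ + (1/2) * ((3*γ - 2) + (2 - γ) * S.V2 τ) * S.Om τ / S.Gp τ := rfl
  have hGpdef : S.Gp τ = 1 + (γ - 1) * S.V2 τ := rfl
  have hGp' : (1 + (γ - 1) * S.V2 τ) ≠ 0 := by rw [← hGpdef]; exact hGp
  rw [hq, hGpdef]
  field_simp
  ring

/-- The V² evolution term rewritten. -/
lemma TV2_eq (S : BianchiVIII γ I) {τ : ℝ} (hG : (1 - (γ - 1) * S.V2 τ) ≠ 0) :
    2 * (S.T τ * S.V2 τ - S.W τ)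
    = 2 * (1 - S.V2 τ) * ((3*γ - 4) * S.V2 τ - S.W τ) / (1 - (γ - 1) * S.V2 τ) := by
  have hT : S.T τ = ((3*γ - 4) * (1 - S.V2 τ) + (2 - γ) * S.W τ) / (1 - (γ - 1) * S.V2 τ) := rfl
  rw [hT]
  rw [eq_div_iff hG]
  linear_combination (2 * S.V2 τ) * div_mul_cancel₀ ((3*γ - 4) * (1 - S.V2 τ) + (2 - γ) * S.W τ) hG

lemma hasDerivAt_exp_lin (lam τ₁ τ : ℝ) :
    HasDerivAt (fun t : ℝ => Real.exp (-lam*(t-τ₁))) (-lam * Real.exp (-lam*(τ-τ₁))) τ := by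
  have h : HasDerivAt (fun t : ℝ => -lam*(t-τ₁)) (-lam) τ := by
    simpa using ((hasDerivAt_id τ).sub_const τ₁).const_mul (-lam)
  convert h.exp using 1; ring

end BianchiVIII

set_option maxHeartbeats 1000000 in
open BianchiVIII in
/-- cosmic no-hair: For 0 < γ < 2/3, every type VIII solution
on [τ₀, ∞) with Ω > 0 and V² < 1 satisfies Ω(τ) → 1 and V(τ) → 0 as τ → ∞. -/
theorem bianchiVIII_cosmic_no_hair (γ : ℝ) (hγ0 : 0 < γ) (hγ1 : γ < 2/3)
    (τ₀ : ℝ) (S : BianchiVIII γ (Set.Ici τ₀))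
    (hsol : S.IsSolution) (hVIII : S.IsTypeVIII)
    (hOm : ∀ τ ∈ Set.Ici τ₀, 0 < S.Om τ)
    (hV : ∀ τ ∈ Set.Ici τ₀, S.V2 τ < 1) :
    Filter.Tendsto S.Om Filter.atTop (nhds 1) ∧
    Filter.Tendsto S.V Filter.atTop (nhds 0) := by
  have hγ2 : γ < 1 := by linarith
  have hy0 : ∀ τ ∈ Set.Ici τ₀, 0 ≤ S.V2 τ := fun τ _ => V2_nonneg S τ
  have hSigOm : ∀ τ ∈ Set.Ici τ₀, S.Sig2 τ + S.Om τ ≤ 1 :=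
    fun τ hτ => Sig2_add_Om_le_one S hsol hVIII hτ
  have hSig1 : ∀ τ ∈ Set.Ici τ₀, S.Sig2 τ ≤ 1 :=
    fun τ hτ => by have := hSigOm τ hτ; have := hOm τ hτ; linarith
  have hX0 : ∀ τ ∈ Set.Ici τ₀, 0 ≤ 1 - S.Om τ :=
    fun τ hτ => by have := hSigOm τ hτ; have := Sig2_nonneg S τ; linarith
  have hWb : ∀ τ ∈ Set.Ici τ₀, |S.W τ| ≤ 2 * S.V2 τ := fun τ hτ => abs_W_le S (hSig1 τ hτ)
  have hGm : ∀ τ ∈ Set.Ici τ₀, 1 ≤ 1 - (γ-1) * S.V2 τ ∧ 1 - (γ-1) * S.V2 τ ≤ 2 := by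
    intro τ hτ
    have h1 := hy0 τ hτ; have h2 := hV τ hτ
    constructor <;> nlinarith
  -- derivative of V²
  set F : ℝ → ℝ := fun τ => 2 * (S.T τ * S.V2 τ - S.W τ) with hFdef
  have hyd : ∀ τ ∈ Set.Ici τ₀, HasDerivAt S.V2 (F τ) τ := fun τ hτ => hasDerivAt_V2 S hsol hτ
  have hFeq : ∀ τ ∈ Set.Ici τ₀,
      F τ = 2 * (1 - S.V2 τ) * ((3*γ - 4) * S.V2 τ - S.W τ) / (1 - (γ-1) * S.V2 τ) :=
    fun τ hτ => TV2_eq S (by have := (hGm τ hτ).1; linarith)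
  have hFle0 : ∀ τ ∈ Set.Ici τ₀, F τ ≤ 0 := by
    intro τ hτ
    rw [hFeq τ hτ]
    have h1 := hy0 τ hτ; have h2 := hV τ hτ; have h3 := (hGm τ hτ).1
    have h4 := hWb τ hτ
    have hnum : 2 * (1 - S.V2 τ) * ((3*γ - 4) * S.V2 τ - S.W τ) ≤ 0 := by
      have hM : (3*γ - 4) * S.V2 τ - S.W τ ≤ (3*γ - 2) * S.V2 τ := by
        have := abs_le.mp h4; nlinarith
      have hMneg : (3*γ - 4) * S.V2 τ - S.W τ ≤ 0 := le_trans hM (by nlinarith)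
      exact mul_nonpos_of_nonneg_of_nonpos (by linarith) hMneg
    exact div_nonpos_of_nonpos_of_nonneg hnum (by linarith)
  -- V² is antitone
  have hanti : AntitoneOn S.V2 (Set.Ici τ₀) := by
    apply antitoneOn_of_deriv_nonpos (convex_Ici τ₀)
    · exact fun τ hτ => (hyd τ hτ).continuousAt.continuousWithinAt
    · intro τ hτ; rw [interior_Ici] at hτ
      exact ((hyd τ (Set.Ioi_subset_Ici_self hτ)).differentiableAt).differentiableWithinAt
    · intro τ hτ; rw [interior_Ici] at hτ
      rw [(hyd τ (Set.Ioi_subset_Ici_self hτ)).deriv]; exact hFle0 τ (Set.Ioi_subset_Ici_self hτ)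
  set δ := 1 - S.V2 τ₀ with hδdef
  have hδ : 0 < δ := by have := hV τ₀ Set.self_mem_Ici; simp [hδdef]; linarith
  set a₀ := δ * (2 - 3*γ) with ha₀def
  have ha₀ : 0 < a₀ := mul_pos hδ (by linarith)
  have hFle : ∀ τ ∈ Set.Ici τ₀, F τ ≤ -a₀ * S.V2 τ + 0 * Real.exp (-(a₀/2)*(τ-τ₀)) := by
    intro τ hτ
    rw [hFeq τ hτ]
    have h1 := hy0 τ hτ; have h2 := hV τ hτ; have h3 := (hGm τ hτ).1
    have h3' := (hGm τ hτ).2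
    have h4 := abs_le.mp (hWb τ hτ)
    have h5 : S.V2 τ ≤ S.V2 τ₀ := hanti Set.self_mem_Ici hτ hτ
    have hδle : δ ≤ 1 - S.V2 τ := by simp only [hδdef]; linarith
    rw [div_le_iff₀ (by linarith : (0:ℝ) < 1 - (γ-1) * S.V2 τ)]
    have hM : (3*γ - 4) * S.V2 τ - S.W τ ≤ (3*γ - 2) * S.V2 τ := by nlinarith
    have hMneg : (3*γ - 2) * S.V2 τ ≤ 0 := by nlinarith
    simp only [zero_mul, add_zero]
    nlinarith [mul_nonneg (sub_nonneg.mpr hδle) (neg_nonneg.mpr (le_trans hM hMneg)),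
      mul_nonneg (mul_nonneg hδ.le (by linarith : (0:ℝ) ≤ 2 - 3*γ)) h1,
      mul_nonneg (sub_nonneg.mpr h3') (mul_nonneg (mul_nonneg hδ.le (by linarith : (0:ℝ) ≤ 2 - 3*γ)) h1),
      mul_le_mul_of_nonneg_left hM (by linarith : (0:ℝ) ≤ 2*δ),
      mul_le_mul_of_nonneg_right hδle (neg_nonneg.mpr (le_trans hM hMneg))]
  have hybound := exp_decay S.V2 F τ₀ a₀ 0 (a₀/2) (by linarith) (by linarith) le_rfl
    hyd hFle hy0
  set B := S.V2 τ₀ with hBdef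
  have hB0 : 0 ≤ B := hy0 τ₀ Set.self_mem_Ici
  have hybound' : ∀ τ ∈ Set.Ici τ₀, S.V2 τ ≤ B * Real.exp (-(a₀/2)*(τ-τ₀)) := by
    intro τ hτ
    have := hybound τ hτ
    simpa using this
  have hytend : Filter.Tendsto S.V2 Filter.atTop (nhds 0) :=
    tendsto_zero_of_exp_bound S.V2 τ₀ B (a₀/2) (by linarith) hy0 hybound'
  have hVtend : Filter.Tendsto S.V Filter.atTop (nhds 0) := by
    have h := (Real.continuous_sqrt.tendsto 0).comp hytend
    rw [Real.sqrt_zero] at h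
    exact h
  refine ⟨?_, hVtend⟩
  -- choose τ₁ where V² is small
  set c := (2 - 3*γ)/2 with hcdef
  have hc : 0 < c := by simp only [hcdef]; linarith
  set ystar := (2 - 3*γ)/(2*(2-γ)) with hystardef
  have hystar : 0 < ystar := by apply div_pos <;> linarith
  have hyev : ∀ᶠ τ in Filter.atTop, S.V2 τ < ystar := hytend.eventually (gt_mem_nhds hystar)
  obtain ⟨N, hN⟩ := Filter.eventually_atTop.mp hyev
  set τ₁ := max N τ₀ with hτ₁def
  have hτ₁0 : τ₀ ≤ τ₁ := le_max_right _ _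
  have hin : ∀ τ ∈ Set.Ici τ₁, τ ∈ Set.Ici τ₀ := fun τ hτ => le_trans hτ₁0 hτ
  have hysmall : ∀ τ ∈ Set.Ici τ₁, S.V2 τ < ystar := fun τ hτ => hN τ (le_trans (le_max_left _ _) hτ)
  set lam := a₀/2 with hlamdef
  have hlam : 0 < lam := by simp only [hlamdef]; linarith
  have hyb1 : ∀ τ ∈ Set.Ici τ₁, S.V2 τ ≤ B * Real.exp (-lam*(τ-τ₁)) := by
    intro τ hτ
    refine le_trans (hybound' τ (hin τ hτ)) ?_
    apply mul_le_mul_of_nonneg_left _ hB0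
    apply Real.exp_le_exp.mpr
    nlinarith [hτ₁0, hτ]
  -- Gp facts
  have hGp : ∀ τ ∈ Set.Ici τ₀, γ ≤ S.Gp τ ∧ S.Gp τ ≤ 1 ∧ 0 < S.Gp τ := by
    intro τ hτ
    have h1 := hy0 τ hτ; have h2 := hV τ hτ
    have e : S.Gp τ = 1 + (γ-1) * S.V2 τ := rfl
    refine ⟨by rw [e]; nlinarith, by rw [e]; nlinarith, by rw [e]; nlinarith⟩
  -- rewritten Ω derivative
  set Nf : ℝ → ℝ := fun τ => 4 * S.Sig2 τ * S.Gp τ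
    - ((3*γ - 2) + (2 - γ) * S.V2 τ) * (1 - S.Om τ) - γ * S.W τ with hNfdef
  have hOmd : ∀ τ ∈ Set.Ici τ₀, HasDerivAt S.Om (S.Om τ * Nf τ / S.Gp τ) τ := by
    intro τ hτ
    have h := hsol.hOm τ hτ
    rw [Om_deriv_eq S (ne_of_gt (hGp τ hτ).2.2)] at h
    exact h
  -- lower bound on Nf/Gp on [τ₁, ∞)
  have hNlow : ∀ τ ∈ Set.Ici τ₁, c * (1 - S.Om τ) - 2 * S.V2 τ ≤ Nf τ / S.Gp τ := by
    intro τ hτ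
    have hτ' := hin τ hτ
    have h1 := hy0 τ hτ'
    have h4 := abs_le.mp (hWb τ hτ')
    have hXnn := hX0 τ hτ'
    have hGpf := hGp τ hτ'
    have hP : (3*γ - 2) + (2 - γ) * S.V2 τ ≤ -c := by
      have := hysmall τ hτ
      have h2γ : (0:ℝ) < 2 - γ := by linarith
      have : (2 - γ) * S.V2 τ < (2 - γ) * ystar := by nlinarith
      have heq : (2 - γ) * ystar = c := by
        simp only [hystardef, hcdef]; field_simp
      simp only [hcdef] at *; nlinarith
    have hNlow0 : c * (1 - S.Om τ) - 2 * γ * S.V2 τ ≤ Nf τ := by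
      simp only [hNfdef]
      nlinarith [mul_nonneg (mul_nonneg (by norm_num : (0:ℝ) ≤ 4) (Sig2_nonneg S τ)) hGpf.2.2.le,
        mul_le_mul_of_nonneg_right hP hXnn]
    rw [le_div_iff₀ hGpf.2.2]
    nlinarith [mul_nonneg (mul_nonneg hc.le hXnn) (sub_nonneg.mpr hGpf.2.1),
      mul_nonneg h1 (sub_nonneg.mpr hGpf.1)]
  -- lower bound on Ω on [τ₁, ∞)
  set u : ℝ → ℝ := fun τ => Real.log (S.Om τ) - (2*B/lam) * Real.exp (-lam*(τ-τ₁)) with hudef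
  have hud : ∀ τ ∈ Set.Ici τ₁, HasDerivAt u
      (Nf τ / S.Gp τ + 2*B*Real.exp (-lam*(τ-τ₁))) τ := by
    intro τ hτ
    have hτ' := hin τ hτ
    have hlog := (hOmd τ hτ').log (ne_of_gt (hOm τ hτ'))
    have hexp := (hasDerivAt_exp_lin lam τ₁ τ).const_mul (2*B/lam)
    have := hlog.sub hexp
    refine this.congr_deriv ?_
    have hOmne := ne_of_gt (hOm τ hτ')
    have hlamne := ne_of_gt hlam
    have hGpne := ne_of_gt (hGp τ hτ').2.2
    field_simp
    ring
  have humono : MonotoneOn u (Set.Ici τ₁) := by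
    apply monotoneOn_of_deriv_nonneg (convex_Ici τ₁)
    · exact fun τ hτ => (hud τ hτ).continuousAt.continuousWithinAt
    · intro τ hτ; rw [interior_Ici] at hτ
      exact ((hud τ (Set.Ioi_subset_Ici_self hτ)).differentiableAt).differentiableWithinAt
    · intro τ hτ; rw [interior_Ici] at hτ
      have hτ' : τ ∈ Set.Ici τ₁ := Set.Ioi_subset_Ici_self hτ
      rw [(hud τ hτ').deriv]
      have h1 := hNlow τ hτ'
      have h2 := hyb1 τ hτ'
      have hXnn := hX0 τ (hin τ hτ')
      nlinarith [mul_nonneg hc.le hXnn]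
  set m := S.Om τ₁ * Real.exp (-(2*B/lam)) with hmdef
  have hm : 0 < m := mul_pos (hOm τ₁ (Set.mem_Ici.mpr hτ₁0)) (Real.exp_pos _)
  have hOmlow : ∀ τ ∈ Set.Ici τ₁, m ≤ S.Om τ := by
    intro τ hτ
    have hu := humono Set.self_mem_Ici hτ hτ
    simp only [hudef] at hu
    have he1 : Real.exp (-lam*(τ₁-τ₁)) = 1 := by simp
    rw [he1, mul_one] at hu
    have hBlam : 0 ≤ (2*B/lam) * Real.exp (-lam*(τ-τ₁)) := by positivity
    have hlog : Real.log (S.Om τ₁) - 2*B/lam ≤ Real.log (S.Om τ) := by linarith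
    calc m = Real.exp (Real.log (S.Om τ₁) - 2*B/lam) := by
          rw [Real.exp_sub, Real.exp_log (hOm τ₁ (Set.mem_Ici.mpr hτ₁0)), hmdef,
            Real.exp_neg, div_eq_mul_inv]
          ring_nf
      _ ≤ Real.exp (Real.log (S.Om τ)) := Real.exp_le_exp.mpr hlog
      _ = S.Om τ := Real.exp_log (hOm τ (hin τ hτ))
  -- decay of X = 1 - Ω
  set a₁ := c * m with ha₁def
  have ha₁ : 0 < a₁ := mul_pos hc hm
  set lam₂ := min lam a₁ / 2 with hlam₂def
  have hlam₂ : 0 < lam₂ := by apply half_pos; exact lt_min hlam ha₁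
  have hlam₂a : lam₂ < a₁ := by
    have : min lam a₁ ≤ a₁ := min_le_right _ _
    simp only [hlam₂def]; linarith
  have hlam₂lam : lam₂ ≤ lam := by
    have : min lam a₁ ≤ lam := min_le_left _ _
    simp only [hlam₂def]; linarith
  set X : ℝ → ℝ := fun τ => 1 - S.Om τ with hXdef
  set X' : ℝ → ℝ := fun τ => -(S.Om τ * Nf τ / S.Gp τ) with hX'def
  have hXd : ∀ τ ∈ Set.Ici τ₁, HasDerivAt X (X' τ) τ :=
    fun τ hτ => (hOmd τ (hin τ hτ)).const_sub 1
  have hXb : ∀ τ ∈ Set.Ici τ₁, X' τ ≤ -a₁ * X τ + (2*B) * Real.exp (-lam₂*(τ-τ₁)) := by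
    intro τ hτ
    have hτ' := hin τ hτ
    have h1 := hNlow τ hτ
    have h2 := hyb1 τ hτ
    have h3 := hOmlow τ hτ
    have h4 := hX0 τ hτ'
    have h5 : S.Om τ ≤ 1 := by linarith
    have h6 := hy0 τ hτ'
    have h7 : Real.exp (-lam*(τ-τ₁)) ≤ Real.exp (-lam₂*(τ-τ₁)) := by
      apply Real.exp_le_exp.mpr
      have hτΔ : 0 ≤ τ - τ₁ := by simpa using hτ
      nlinarith
    have hOmpos := hOm τ hτ'
    have he : S.Om τ * Nf τ / S.Gp τ = S.Om τ * (Nf τ / S.Gp τ) := mul_div_assoc _ _ _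
    simp only [hX'def, hXdef, ha₁def]
    rw [he]
    nlinarith [mul_le_mul_of_nonneg_left h1 hOmpos.le,
      mul_le_mul_of_nonneg_left h2 (by norm_num : (0:ℝ) ≤ 2),
      mul_nonneg (mul_nonneg hc.le (sub_nonneg.mpr h3)) h4,
      mul_nonneg h6 (sub_nonneg.mpr h5),
      mul_le_mul_of_nonneg_left h7 (by linarith : (0:ℝ) ≤ 2*B)]
  have hXpos : ∀ τ ∈ Set.Ici τ₁, 0 ≤ X τ := fun τ hτ => hX0 τ (hin τ hτ)
  have hXbound := exp_decay X X' τ₁ a₁ (2*B) lam₂ hlam₂ hlam₂a (by linarith)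
    hXd hXb hXpos
  have hXtend : Filter.Tendsto X Filter.atTop (nhds 0) :=
    tendsto_zero_of_exp_bound X τ₁ (X τ₁ + (2*B)/(a₁-lam₂)) lam₂ hlam₂ hXpos hXbound
  have : Filter.Tendsto (fun τ => 1 - X τ) Filter.atTop (nhds (1 - 0)) :=
    Filter.Tendsto.sub tendsto_const_nhds hXtend
  simp only [sub_zero] at this
  convert this using 2 with τ
  simp [hXdef]
end
end

section
/- Let Γ = 6γ/7 and define Z₁ = (1−V²)^((2−γ)/2) · Ω^(1−Γ) / (G₊^(1−Γ) · V^Γ). Along any solution of the tilted Bianchi type VIII dynamical system with Ω(τ) > 0 and 0 < V(τ)² < 1 for all τ, Z₁ is differentiable and satisfies Z₁' = [2(1−Γ)q + (2+2Γ−3γ) + Γ·(W/V²)]·Z₁. -/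
noncomputable section

open Complex Filter

/-- Z₁ = (1−V²)^((2−γ)/2) · Ω^(1−Γ) / (G₊^(1−Γ) · V^Γ), with Γ = 6γ/7. -/
noncomputable def Z1 {γ : ℝ} {I : Set ℝ} (S : BianchiVIII γ I) (τ : ℝ) : ℝ :=
  (1 - S.V2 τ) ^ ((2 - γ)/2) * S.Om τ ^ (1 - 6*γ/7) /
    (S.Gp τ ^ (1 - 6*γ/7) * S.V τ ^ (6*γ/7))

set_option maxHeartbeats 2000000 in
/-- Along any solution of the tilted Bianchi type VIII system
with Ω > 0 and 0 < V² < 1, Z₁ is differentiable and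
Z₁' = [2(1−Γ)q + (2+2Γ−3γ) + Γ·(W/V²)]·Z₁, where Γ = 6γ/7. -/
theorem bianchiVIII_Z1_deriv (γ : ℝ) (hγ0 : 0 < γ) (hγ2 : γ < 2)
    (I : Set ℝ) (S : BianchiVIII γ I) (hsol : S.IsSolution)
    (hOm : ∀ τ ∈ I, 0 < S.Om τ)
    (hV : ∀ τ ∈ I, 0 < S.V2 τ ∧ S.V2 τ < 1) :
    ∀ τ ∈ I, HasDerivAt (Z1 S)
      ((2 * (1 - 6*γ/7) * S.q τ + (2 + 2*(6*γ/7) - 3*γ)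
        + (6*γ/7) * (S.W τ / S.V2 τ)) * Z1 S τ) τ := by
  intro τ hτ
  obtain ⟨hV2pos, hV2lt⟩ := hV τ hτ
  have hOmpos := hOm τ hτ
  have hApos : 0 < 1 - S.V2 τ := by linarith
  have hGpos : 0 < S.Gp τ := by
    have h : S.Gp τ = 1 + (γ - 1) * S.V2 τ := rfl
    nlinarith [h]
  have hupos : 0 < S.V τ := Real.sqrt_pos.mpr hV2pos
  have huu : S.V τ * S.V τ = S.V2 τ := Real.mul_self_sqrt hV2pos.le
  -- derivative of V2
  have hv1d := hsol.hv1 τ hτ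
  have hvcd := hsol.hv τ hτ
  have hre := Complex.reCLM.hasFDerivAt.comp_hasDerivAt τ hvcd
  have him := Complex.imCLM.hasFDerivAt.comp_hasDerivAt τ hvcd
  have hV2fun : S.V2 = fun t => S.v1 t * S.v1 t + ((S.v t).re * (S.v t).re + (S.v t).im * (S.v t).im) := by
    funext t
    simp [BianchiVIII.V2, Complex.sq_norm, Complex.normSq_apply]
    ring
  have hV2d : HasDerivAt S.V2 (2 * (S.T τ * S.V2 τ - S.W τ)) τ := by
    have h0 : HasDerivAt (fun t => S.v1 t * S.v1 t + ((S.v t).re * (S.v t).re + (S.v t).im * (S.v t).im)) _ τ :=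
      ((hv1d.mul hv1d).add ((hre.mul hre).add (him.mul him)))
    rw [← hV2fun] at h0
    convert h0 using 1
    simp only [BianchiVIII.V2, BianchiVIII.W, Complex.sq_norm, Complex.normSq_apply,
      Complex.mul_re, Complex.mul_im, Complex.add_re, Complex.add_im, Complex.sub_re,
      Complex.sub_im, Complex.ofReal_re, Complex.ofReal_im, Complex.I_re, Complex.I_im,
      Complex.conj_re, Complex.conj_im, pow_two, Complex.norm_mul_self_eq_normSq, Complex.reCLM_apply, Complex.imCLM_apply,
      Function.comp]
    ring
  -- derivative of Om, Gp, V
  have hOmd := hsol.hOm τ hτ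
  have hGd : HasDerivAt S.Gp ((γ - 1) * (2 * (S.T τ * S.V2 τ - S.W τ))) τ := by
    have h : HasDerivAt (fun t => 1 + (γ - 1) * S.V2 t)
        (0 + (γ - 1) * (2 * (S.T τ * S.V2 τ - S.W τ))) τ :=
      (hasDerivAt_const τ 1).add (hV2d.const_mul (γ - 1))
    rw [show S.Gp = fun t => 1 + (γ - 1) * S.V2 t from rfl]
    simpa [BianchiVIII.Gp] using h
  have hud : HasDerivAt S.V (2 * (S.T τ * S.V2 τ - S.W τ) / (2 * S.V τ)) τ := by
    have h := hV2d.sqrt hV2pos.ne'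
    exact h
  -- rpow derivatives
  have h1 : HasDerivAt (fun t => (1 - S.V2 t) ^ ((2 - γ)/2))
      ((-(2 * (S.T τ * S.V2 τ - S.W τ))) * ((2 - γ)/2) * (1 - S.V2 τ) ^ ((2 - γ)/2 - 1)) τ := by
    have h := ((hasDerivAt_const τ (1:ℝ)).sub hV2d).rpow_const (p := (2 - γ)/2) (Or.inl hApos.ne')
    simpa using h
  have h2 : HasDerivAt (fun t => S.Om t ^ (1 - 6*γ/7))
      ((S.Om τ / S.Gp τ * (2 * S.q τ - (3*γ - 2)
        + (2 * S.q τ * (γ - 1) - (2 - γ)) * S.V2 τ - γ * S.W τ)) * (1 - 6*γ/7)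
        * S.Om τ ^ (1 - 6*γ/7 - 1)) τ :=
    hOmd.rpow_const (Or.inl hOmpos.ne')
  have h3 : HasDerivAt (fun t => S.Gp t ^ (1 - 6*γ/7))
      (((γ - 1) * (2 * (S.T τ * S.V2 τ - S.W τ))) * (1 - 6*γ/7)
        * S.Gp τ ^ (1 - 6*γ/7 - 1)) τ :=
    hGd.rpow_const (Or.inl hGpos.ne')
  have h4 : HasDerivAt (fun t => S.V t ^ (6*γ/7))
      ((2 * (S.T τ * S.V2 τ - S.W τ) / (2 * S.V τ)) * (6*γ/7)
        * S.V τ ^ (6*γ/7 - 1)) τ :=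
    hud.rpow_const (Or.inl hupos.ne')
  have hden : S.Gp τ ^ (1 - 6*γ/7) * S.V τ ^ (6*γ/7) ≠ 0 :=
    (mul_pos (Real.rpow_pos_of_pos hGpos _) (Real.rpow_pos_of_pos hupos _)).ne'
  have hZ := ((h1.mul h2).div (h3.mul h4) hden)
  have hZfun : Z1 S = fun t => (1 - S.V2 t) ^ ((2 - γ)/2) * S.Om t ^ (1 - 6*γ/7) /
      (S.Gp t ^ (1 - 6*γ/7) * S.V t ^ (6*γ/7)) := rfl
  simp only [Pi.mul_apply] at hZ
  replace hZ : HasDerivAt (Z1 S) _ τ := hZ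
  convert hZ using 1
  -- final algebraic identity
  have e1 : (1 - S.V2 τ) ^ ((2 - γ)/2 - 1) = (1 - S.V2 τ) ^ ((2 - γ)/2) / (1 - S.V2 τ) :=
    Real.rpow_sub_one hApos.ne' _
  have e2 : S.Om τ ^ (1 - 6*γ/7 - 1) = S.Om τ ^ (1 - 6*γ/7) / S.Om τ :=
    Real.rpow_sub_one hOmpos.ne' _
  have e3 : S.Gp τ ^ (1 - 6*γ/7 - 1) = S.Gp τ ^ (1 - 6*γ/7) / S.Gp τ :=
    Real.rpow_sub_one hGpos.ne' _
  have e4 : S.V τ ^ (6*γ/7 - 1) = S.V τ ^ (6*γ/7) / S.V τ :=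
    Real.rpow_sub_one hupos.ne' _
  rw [e1, e2, e3, e4]
  have hZval : Z1 S τ = (1 - S.V2 τ) ^ ((2 - γ)/2) * S.Om τ ^ (1 - 6*γ/7) /
      (S.Gp τ ^ (1 - 6*γ/7) * S.V τ ^ (6*γ/7)) := rfl
  rw [hZval]
  set A := (1 - S.V2 τ) ^ ((2 - γ)/2) with hA
  set O := S.Om τ ^ (1 - 6*γ/7) with hO
  set G := S.Gp τ ^ (1 - 6*γ/7) with hG
  set U := S.V τ ^ (6*γ/7) with hU
  have hApos' : 0 < A := Real.rpow_pos_of_pos hApos _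
  have hOpos' : 0 < O := Real.rpow_pos_of_pos hOmpos _
  have hGpos' : 0 < G := Real.rpow_pos_of_pos hGpos _
  have hUpos' : 0 < U := Real.rpow_pos_of_pos hupos _
  have hTden : (0:ℝ) < 1 - (γ - 1) * S.V2 τ := by nlinarith
  have hTval : S.T τ = ((3*γ - 4) * (1 - S.V2 τ) + (2 - γ) * S.W τ) / (1 - (γ - 1) * S.V2 τ) := rfl
  have hGpval : S.Gp τ = 1 + (γ - 1) * S.V2 τ := rfl
  have hV2val : S.V2 τ = S.V τ * S.V τ := huu.symm
  rw [hTval, hGpval, hV2val]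
  have hA2 : (0:ℝ) < 1 - S.V τ * S.V τ := by rw [huu]; exact hApos
  have hT2 : (0:ℝ) < 1 - (γ - 1) * (S.V τ * S.V τ) := by rw [huu]; exact hTden
  have hG2 : (0:ℝ) < 1 + (γ - 1) * (S.V τ * S.V τ) := by rw [huu]; exact hGpos
  have hA3 : 1 - S.V τ ^ 2 ≠ 0 := by nlinarith
  have hT3 : 1 - S.V τ ^ 2 * (γ - 1) ≠ 0 := by nlinarith
  have hG3 : 1 + S.V τ ^ 2 * (γ - 1) ≠ 0 := by nlinarith
  field_simp [hA2.ne', hT2.ne', hG2.ne', hOmpos.ne', hupos.ne',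
    hApos'.ne', hOpos'.ne', hGpos'.ne', hUpos'.ne', hA3, hT3, hG3]
  ring
end
end

section
/- Let 0 < γ ≤ 14/15 and Γ = 6γ/7. At every point of a type VIII solution of the tilted Bianchi type VIII dynamical system with Ω > 0 and 0 < V² < 1, one has 2(1−Γ)q + (2+2Γ−3γ) + Γ·(W/V²) ≥ (1/7)(14−15γ)·(2Σ² + (1/4)N₁² − N₁N̄ + |N×|²) + γ·(18(1−γ) + (10−9γ)V²)·Ω/(7G₊); in particular, the function Z₁ = (1−V²)^((2−γ)/2) · Ω^(1−Γ) / (G₊^(1−Γ) · V^Γ) is strictly increasing along such a solution. -/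
noncomputable section

open Complex Filter

set_option maxHeartbeats 1000000 in
private lemma quadform_sq_le (m11 m12 m13 m22 m23 w1 w2 w3 σ : ℝ)
    (hs : 6*σ^2 = m11^2+m22^2+(m11+m22)^2+2*m12^2+2*m13^2+2*m23^2) :
    (m11*w1^2+m22*w2^2-(m11+m22)*w3^2+2*m12*w1*w2+2*m13*w1*w3+2*m23*w2*w3)^2
      ≤ (2*σ*(w1^2+w2^2+w3^2))^2 := by
  rcases eq_or_lt_of_le (by positivity : (0:ℝ) ≤ w1^2+w2^2) with hm0 | hm0
  · have hw1 : w1 = 0 := by nlinarith [sq_nonneg w1, sq_nonneg w2]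
    have hw2 : w2 = 0 := by nlinarith [sq_nonneg w1, sq_nonneg w2]
    subst hw1; subst hw2
    nlinarith [mul_nonneg (sq_nonneg (w3^2)) (sq_nonneg (m11-m22)),
      mul_nonneg (sq_nonneg (w3^2)) (sq_nonneg m12),
      mul_nonneg (sq_nonneg (w3^2)) (sq_nonneg m13),
      mul_nonneg (sq_nonneg (w3^2)) (sq_nonneg m23), sq_nonneg (w3^2), sq_nonneg σ]
  · set t := w1^2+w2^2+w3^2 with ht
    set m := w1^2+w2^2 with hm
    set A := m11*w1^2+m22*w2^2-(m11+m22)*w3^2+2*m12*w1*w2+2*m13*w1*w3+2*m23*w2*w3 with hA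
    set P1 := m11*w2^2 - 2*m12*w1*w2 + m22*w1^2 with hP1
    set P2 := m11*w1^2*w3^2 + m22*w2^2*w3^2 - (m11+m22)*m^2
      + 2*m12*w1*w2*w3^2 - 2*m13*w1*w3*m - 2*m23*w2*w3*m with hP2
    set Q1 := -(m11*w1*w2) + m12*w1^2 - m12*w2^2 + m22*w1*w2 - m13*w2*w3 + m23*w1*w3 with hQ1
    set Q2 := -(m11*w1^2*w3) - m22*w2^2*w3 - 2*m12*w1*w2*w3 + m13*w1*m + m23*w2*m
      - m13*w1*w3^2 - m23*w2*w3^2 - (m11+m22)*w3*m with hQ2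
    set Q3 := m11*w1*w2*w3 - m22*w1*w2*w3 + m12*w2^2*w3 - m12*w1^2*w3
      - m13*w2*m + m23*w1*m with hQ3
    have hid1 : m*A + t*P1 + P2 = 0 := by rw [hA, hP1, hP2, hm, ht]; ring
    have hid2 : m^2*t^2*(6*σ^2) = m^2*A^2 + t^2*P1^2 + P2^2
        + 2*m*t*Q1^2 + 2*m*Q2^2 + 2*t*Q3^2 := by
      rw [hs, hA, hP1, hP2, hQ1, hQ2, hQ3, hm, ht]; ring
    have ht0 : 0 < t := by positivity
    have h3 : t*P1+P2 = -(m*A) := by linarith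
    have hsq : (t*P1+P2)^2 = (m*A)^2 := by rw [h3]; ring
    have h4 : (m*A)^2 ≤ 2*(t^2*P1^2+P2^2) := by nlinarith [sq_nonneg (t*P1-P2), hsq]
    clear_value t m A P1 P2 Q1 Q2 Q3
    have h5 : m^2*A^2 ≤ m^2*(2*σ*t)^2 := by
      nlinarith [hid2, h4, mul_nonneg (mul_nonneg hm0.le ht0.le) (sq_nonneg Q1),
        mul_nonneg hm0.le (sq_nonneg Q2), mul_nonneg ht0.le (sq_nonneg Q3)]
    have hm2 : 0 < m^2 := by positivity
    calc A^2 = m^2*A^2/m^2 := by field_simp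
    _ ≤ m^2*(2*σ*t)^2/m^2 := by exact (div_le_div_iff_of_pos_right hm2).mpr h5
    _ = (2*σ*t)^2 := by field_simp

/-- The sharp lower bound `W ≥ -2σ|w|²` for the tilted shear quadratic form,
where `σ² = Σ²`. -/
private lemma shear_low (p a b c d v1 x y σ : ℝ) (hσ : 0 ≤ σ)
    (hs : σ^2 = p^2+a^2+b^2+c^2+d^2) :
    -(2*σ) * (v1^2+(x^2+y^2)) ≤
      p*(-2*v1^2+(x^2+y^2)) + 2*Real.sqrt 3*v1*(c*x+d*y)
        + Real.sqrt 3*(a*(x^2-y^2)+2*b*x*y) := by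
  have hr : Real.sqrt 3 ^ 2 = 3 := Real.sq_sqrt (by norm_num)
  set r := Real.sqrt 3 with hrdef
  have h6 : 6*σ^2 = (-2*p)^2+(p+r*a)^2+((-2*p)+(p+r*a))^2+2*(r*c)^2+2*(r*d)^2+2*(r*b)^2 := by
    linear_combination 6*hs - 2*(a^2+b^2+c^2+d^2)*hr
  have hq := quadform_sq_le (-2*p) (r*c) (r*d) (p+r*a) (r*b) v1 x y σ h6
  have hAe : (-2*p)*v1^2+(p+r*a)*x^2-((-2*p)+(p+r*a))*y^2+2*(r*c)*v1*x+2*(r*d)*v1*y+2*(r*b)*x*y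
      = p*(-2*v1^2+(x^2+y^2)) + 2*r*v1*(c*x+d*y) + r*(a*(x^2-y^2)+2*b*x*y) := by ring
  rw [hAe] at hq
  nlinarith [hq, mul_nonneg hσ (by positivity : (0:ℝ) ≤ v1^2+(x^2+y^2))]

private lemma hasDerivAt_cre {f : ℝ → ℂ} {f' : ℂ} {x : ℝ} (h : HasDerivAt f f' x) :
    HasDerivAt (fun t => (f t).re) f'.re x := by
  exact Complex.reCLM.hasFDerivAt.comp_hasDerivAt x h

private lemma hasDerivAt_cim {f : ℝ → ℂ} {f' : ℂ} {x : ℝ} (h : HasDerivAt f f' x) :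
    HasDerivAt (fun t => (f t).im) f'.im x := by
  exact Complex.imCLM.hasFDerivAt.comp_hasDerivAt x h

set_option maxHeartbeats 4000000 in
/-- For 0 < γ ≤ 14/15, Γ = 6γ/7, at every point of a type VIII
solution with Ω > 0 and 0 < V² < 1, the growth factor of Z₁ is bounded below
by (1/7)(14−15γ)(2Σ² + (1/4)N₁² − N₁N̄ + |N×|²) + γ(18(1−γ)+(10−9γ)V²)Ω/(7G₊);
in particular Z₁ is strictly increasing along the solution. -/
theorem bianchiVIII_Z1_monotone (γ : ℝ) (hγ0 : 0 < γ) (hγ1 : γ ≤ 14/15)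
    (τ₀ : ℝ) (S : BianchiVIII γ (Set.Ici τ₀))
    (hsol : S.IsSolution) (hVIII : S.IsTypeVIII)
    (hOm : ∀ τ ∈ Set.Ici τ₀, 0 < S.Om τ)
    (hV : ∀ τ ∈ Set.Ici τ₀, 0 < S.V2 τ ∧ S.V2 τ < 1) :
    (∀ τ ∈ Set.Ici τ₀,
      (1/7) * (14 - 15*γ) * (2 * S.Sig2 τ + (1/4) * S.N1 τ ^ 2
          - S.N1 τ * S.Nb τ + ‖S.Nx τ‖ ^ 2)
        + γ * (18 * (1 - γ) + (10 - 9*γ) * S.V2 τ) * S.Om τ / (7 * S.Gp τ)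
      ≤ 2 * (1 - 6*γ/7) * S.q τ + (2 + 2*(6*γ/7) - 3*γ)
        + (6*γ/7) * (S.W τ / S.V2 τ)) ∧
    StrictMonoOn (Z1 S) (Set.Ici τ₀) := by
  have hγlt1 : γ < 1 := lt_of_le_of_lt hγ1 (by norm_num)
  have main : ∀ τ ∈ Set.Ici τ₀,
      ((1/7) * (14 - 15*γ) * (2 * S.Sig2 τ + (1/4) * S.N1 τ ^ 2
          - S.N1 τ * S.Nb τ + ‖S.Nx τ‖ ^ 2)
        + γ * (18 * (1 - γ) + (10 - 9*γ) * S.V2 τ) * S.Om τ / (7 * S.Gp τ)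
      ≤ 2 * (1 - 6*γ/7) * S.q τ + (2 + 2*(6*γ/7) - 3*γ)
        + (6*γ/7) * (S.W τ / S.V2 τ))
      ∧ HasDerivAt (Z1 S) (Z1 S τ * (2 * (1 - 6*γ/7) * S.q τ + (2 + 2*(6*γ/7) - 3*γ)
          + (6*γ/7) * (S.W τ / S.V2 τ))) τ
      ∧ 0 < Z1 S τ
      ∧ 0 < (1/7) * (14 - 15*γ) * (2 * S.Sig2 τ + (1/4) * S.N1 τ ^ 2
          - S.N1 τ * S.Nb τ + ‖S.Nx τ‖ ^ 2)
        + γ * (18 * (1 - γ) + (10 - 9*γ) * S.V2 τ) * S.Om τ / (7 * S.Gp τ) := by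
    intro τ hτ
    obtain ⟨hN1, hNb, -, -, -⟩ := hVIII τ hτ
    obtain ⟨hu, hu1⟩ := hV τ hτ
    have hΩ := hOm τ hτ
    have hGpos : 0 < S.Gp τ := by
      have h : S.Gp τ = 1 + (γ-1) * S.V2 τ := rfl
      rw [h]; nlinarith
    have hs0 : 0 ≤ S.Sig2 τ := by
      simp only [BianchiVIII.Sig2]; positivity
    have hσ0 : 0 ≤ Real.sqrt (S.Sig2 τ) := Real.sqrt_nonneg _
    have hσ2 : Real.sqrt (S.Sig2 τ)^2 = S.Sig2 τ := Real.sq_sqrt hs0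
    have h1u : (0:ℝ) < 1 - S.V2 τ := by linarith
    -- the shear bound W ≥ -2σ V²
    have hshear : -(2*Real.sqrt (S.Sig2 τ)) * S.V2 τ ≤ S.W τ := by
      have hWe : S.W τ = S.Sp τ * (-2*(S.v1 τ)^2 + ((S.v τ).re^2 + (S.v τ).im^2))
          + 2*Real.sqrt 3*S.v1 τ*((S.S1 τ).re*(S.v τ).re + (S.S1 τ).im*(S.v τ).im)
          + Real.sqrt 3*((S.Sx τ).re*((S.v τ).re^2-(S.v τ).im^2)
              + 2*(S.Sx τ).im*(S.v τ).re*(S.v τ).im) := by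
        simp only [BianchiVIII.W, Complex.sq_norm, Complex.normSq_apply]
        simp only [pow_two, Complex.mul_re, Complex.mul_im, Complex.conj_re, Complex.conj_im]
        ring
      have hV2e : S.V2 τ = (S.v1 τ)^2 + ((S.v τ).re^2 + (S.v τ).im^2) := by
        simp only [BianchiVIII.V2, Complex.sq_norm, Complex.normSq_apply]; ring
      have hSige : Real.sqrt (S.Sig2 τ)^2 = (S.Sp τ)^2 + (S.Sx τ).re^2 + (S.Sx τ).im^2
          + (S.S1 τ).re^2 + (S.S1 τ).im^2 := by
        rw [hσ2]; simp only [BianchiVIII.Sig2, Complex.sq_norm, Complex.normSq_apply]; ring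
      rw [hWe, hV2e]
      exact shear_low (S.Sp τ) (S.Sx τ).re (S.Sx τ).im (S.S1 τ).re (S.S1 τ).im
        (S.v1 τ) (S.v τ).re (S.v τ).im (Real.sqrt (S.Sig2 τ)) hσ0 hSige
    -- numerator positivity
    have h149 : (0:ℝ) < 14 - 9*γ := by nlinarith
    have key' : 0 ≤ (14-9*γ)*(Real.sqrt (S.Sig2 τ))^2*S.V2 τ + 6*γ*S.V2 τ + 6*γ*S.W τ := by
      nlinarith [hshear, h149,
        mul_nonneg hu.le (sq_nonneg ((14-9*γ)*Real.sqrt (S.Sig2 τ) - 6*γ)),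
        mul_nonneg (mul_nonneg hγ0.le hu.le) (by linarith : (0:ℝ) ≤ 14-15*γ),
        mul_nonneg (by nlinarith : (0:ℝ) ≤ 6*γ*(14-9*γ))
          (by linarith : (0:ℝ) ≤ S.W τ + 2*Real.sqrt (S.Sig2 τ)*S.V2 τ)]
    have key : 0 ≤ (14-9*γ)*S.Sig2 τ*S.V2 τ + 6*γ*S.V2 τ + 6*γ*S.W τ := by
      rw [hσ2] at key'; exact key'
    have hC1τ := hsol.hC1 τ hτ
    have hKrw : 2 * S.Sig2 τ + (1/4) * S.N1 τ ^ 2 - S.N1 τ * S.Nb τ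
        + ‖S.Nx τ‖ ^ 2 = S.Sig2 τ + 1 - S.Om τ := by linarith
    have hGne : (1:ℝ) + (γ-1)*S.V2 τ ≠ 0 := by nlinarith
    have hiden : (2 * (1 - 6*γ/7) * S.q τ + (2 + 2*(6*γ/7) - 3*γ) + (6*γ/7) * (S.W τ / S.V2 τ))
        - ((1/7) * (14 - 15*γ) * (S.Sig2 τ + 1 - S.Om τ)
          + γ * (18 * (1 - γ) + (10 - 9*γ) * S.V2 τ) * S.Om τ / (7 * S.Gp τ))
        = ((14-9*γ)*S.Sig2 τ*S.V2 τ + 6*γ*S.V2 τ + 6*γ*S.W τ)/(7*S.V2 τ) := by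
      simp only [BianchiVIII.q, BianchiVIII.Gp]
      have hGne' : (1:ℝ) + S.V2 τ * (γ-1) ≠ 0 := by rw [mul_comm]; exact hGne
      field_simp
      ring
    have hineqA : (1/7) * (14 - 15*γ) * (2 * S.Sig2 τ + (1/4) * S.N1 τ ^ 2
          - S.N1 τ * S.Nb τ + ‖S.Nx τ‖ ^ 2)
        + γ * (18 * (1 - γ) + (10 - 9*γ) * S.V2 τ) * S.Om τ / (7 * S.Gp τ)
      ≤ 2 * (1 - 6*γ/7) * S.q τ + (2 + 2*(6*γ/7) - 3*γ)
        + (6*γ/7) * (S.W τ / S.V2 τ) := by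
      rw [hKrw]
      have hdiv : 0 ≤ ((14-9*γ)*S.Sig2 τ*S.V2 τ + 6*γ*S.V2 τ + 6*γ*S.W τ)/(7*S.V2 τ) :=
        div_nonneg key (by linarith)
      linarith [hiden, hdiv]
    -- derivative of V²
    have hder1 := hsol.hv1 τ hτ
    have hder2 := hsol.hv τ hτ
    have hx := hasDerivAt_cre hder2
    have hy := hasDerivAt_cim hder2
    have hV2fun : S.V2 = fun t => S.v1 t^2 + ((S.v t).re^2 + (S.v t).im^2) := by
      funext t; simp only [BianchiVIII.V2, Complex.sq_norm, Complex.normSq_apply]; ring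
    have hu'' : HasDerivAt (fun t => S.v1 t^2 + ((S.v t).re^2 + (S.v t).im^2))
        (2*S.T τ*(S.v1 τ^2 + ((S.v τ).re^2 + (S.v τ).im^2)) - 2*S.W τ) τ := by
      have hd := (hder1.pow 2).add ((hx.pow 2).add (hy.pow 2))
      convert hd using 1
      · rfl
      · rfl
      · rfl
      simp only [Nat.cast_ofNat, pow_one, BianchiVIII.W]
      simp only [Complex.sq_norm, Complex.normSq_apply]
      simp only [pow_two, Complex.mul_re, Complex.mul_im, Complex.add_re, Complex.add_im,
        Complex.sub_re, Complex.sub_im, Complex.ofReal_re, Complex.ofReal_im, Complex.I_re,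
        Complex.I_im, Complex.conj_re, Complex.conj_im]
      ring
    have hu' : HasDerivAt S.V2 (2*S.T τ*S.V2 τ - 2*S.W τ) τ := by
      have h0 : S.V2 τ = S.v1 τ^2 + ((S.v τ).re^2 + (S.v τ).im^2) := by rw [hV2fun]
      rw [h0, hV2fun]
      exact hu''
    -- derivative of G₊
    have hGfun : S.Gp = fun t => 1 + (γ-1)*S.V2 t := funext fun t => rfl
    have hG' : HasDerivAt S.Gp ((γ-1)*(2*S.T τ*S.V2 τ - 2*S.W τ)) τ := by
      rw [hGfun]; exact (hu'.const_mul (γ-1)).const_add 1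
    have hOm' := hsol.hOm τ hτ
    -- rpow pieces
    have hf1 := ((hu'.const_sub 1).rpow_const (p := (2-γ)/2) (Or.inl h1u.ne'))
    have hf2 := (hOm'.rpow_const (p := 1-6*γ/7) (Or.inl hΩ.ne'))
    have hf3 := (hG'.rpow_const (p := 1-6*γ/7) (Or.inl hGpos.ne'))
    have hf4 := (hu'.rpow_const (p := 3*γ/7) (Or.inl hu.ne'))
    have hCpos : 0 < S.Gp τ ^ (1-6*γ/7) := Real.rpow_pos_of_pos hGpos _
    have hDpos : 0 < S.V2 τ ^ (3*γ/7) := Real.rpow_pos_of_pos hu _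
    have hApos : 0 < (1 - S.V2 τ) ^ ((2-γ)/2) := Real.rpow_pos_of_pos h1u _
    have hBpos : 0 < S.Om τ ^ (1-6*γ/7) := Real.rpow_pos_of_pos hΩ _
    have hden_ne : S.Gp τ ^ (1-6*γ/7) * S.V2 τ ^ (3*γ/7) ≠ 0 :=
      ne_of_gt (mul_pos hCpos hDpos)
    have hq' := (hf1.mul hf2).div (hf3.mul hf4) hden_ne
    have hZfun : Z1 S = fun t => (1 - S.V2 t)^((2-γ)/2) * S.Om t^(1-6*γ/7)
        / (S.Gp t^(1-6*γ/7) * (S.V2 t)^(3*γ/7)) := by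
      funext t
      have hv2nn : (0:ℝ) ≤ S.V2 t := by simp only [BianchiVIII.V2]; positivity
      have hV63 : S.V t ^ (6*γ/7) = (S.V2 t)^(3*γ/7) := by
        rw [BianchiVIII.V, Real.sqrt_eq_rpow, ← Real.rpow_mul hv2nn]
        congr 1; ring
      simp only [Z1, hV63]
    have hZval : Z1 S τ = (1 - S.V2 τ)^((2-γ)/2) * S.Om τ^(1-6*γ/7)
        / (S.Gp τ^(1-6*γ/7) * (S.V2 τ)^(3*γ/7)) := by rw [hZfun]
    have hZ1pos : 0 < Z1 S τ := by
      rw [hZval]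
      exact div_pos (mul_pos hApos hBpos) (mul_pos hCpos hDpos)
    have hTne : (1:ℝ) - (γ-1)*S.V2 τ ≠ 0 := by nlinarith
    have hZd : HasDerivAt (Z1 S) (Z1 S τ * (2 * (1 - 6*γ/7) * S.q τ + (2 + 2*(6*γ/7) - 3*γ)
        + (6*γ/7) * (S.W τ / S.V2 τ))) τ := by
      rw [hZval, hZfun]
      convert hq' using 1
      · rfl
      · rfl
      · rfl
      simp only [Pi.mul_apply]
      have hA1 : (1-S.V2 τ)^((2-γ)/2 - 1) = (1-S.V2 τ)^((2-γ)/2) / (1-S.V2 τ) := by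
        rw [Real.rpow_sub h1u, Real.rpow_one]
      have hB1 : S.Om τ^(1-6*γ/7 - 1) = S.Om τ^(1-6*γ/7) / S.Om τ := by
        rw [Real.rpow_sub hΩ, Real.rpow_one]
      have hC1 : S.Gp τ^(1-6*γ/7 - 1) = S.Gp τ^(1-6*γ/7) / S.Gp τ := by
        rw [Real.rpow_sub hGpos, Real.rpow_one]
      have hD1 : S.V2 τ^(3*γ/7 - 1) = S.V2 τ^(3*γ/7) / S.V2 τ := by
        rw [Real.rpow_sub hu, Real.rpow_one]
      rw [hA1, hB1, hC1, hD1]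
      have hGval : S.Gp τ = 1 + (γ-1)*S.V2 τ := rfl
      have hGpos' : (0:ℝ) < 1 + (γ-1)*S.V2 τ := by rw [← hGval]; exact hGpos
      have hCne : ((1:ℝ) + (γ-1)*S.V2 τ) ^ (1-6*γ/7) ≠ 0 :=
        (Real.rpow_pos_of_pos hGpos' _).ne'
      have hTval : S.T τ = ((3*γ - 4) * (1 - S.V2 τ) + (2 - γ) * S.W τ)
          / (1 - (γ - 1) * S.V2 τ) := rfl
      rw [hTval, hGval]
      generalize ((1:ℝ) + (γ-1)*S.V2 τ) ^ (1-6*γ/7) = X at hCne ⊢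
      have hGne' : (1:ℝ) + S.V2 τ * (γ-1) ≠ 0 := by rw [mul_comm]; exact hGne
      have hTne' : (1:ℝ) - S.V2 τ * (γ-1) ≠ 0 := by rw [mul_comm]; exact hTne
      field_simp
      ring
    have hLpos : 0 < (1/7) * (14 - 15*γ) * (2 * S.Sig2 τ + (1/4) * S.N1 τ ^ 2
          - S.N1 τ * S.Nb τ + ‖S.Nx τ‖ ^ 2)
        + γ * (18 * (1 - γ) + (10 - 9*γ) * S.V2 τ) * S.Om τ / (7 * S.Gp τ) := by
      have hterm2 : 0 < γ * (18 * (1 - γ) + (10 - 9*γ) * S.V2 τ) * S.Om τ / (7 * S.Gp τ) := by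
        apply div_pos _ (by linarith)
        apply mul_pos (mul_pos hγ0 (by nlinarith)) hΩ
      have habs : (0:ℝ) ≤ ‖S.Nx τ‖ ^ 2 := sq_nonneg _
      have hterm1 : 0 ≤ (1/7) * (14 - 15*γ) * (2 * S.Sig2 τ + (1/4) * S.N1 τ ^ 2
          - S.N1 τ * S.Nb τ + ‖S.Nx τ‖ ^ 2) := by
        apply mul_nonneg (by linarith)
        nlinarith [mul_pos (neg_pos.mpr hN1) hNb, sq_nonneg (S.N1 τ)]
      linarith
    exact ⟨hineqA, hZd, hZ1pos, hLpos⟩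
  refine ⟨fun τ hτ => (main τ hτ).1, ?_⟩
  refine strictMonoOn_of_deriv_pos (convex_Ici τ₀)
    (fun t ht => ((main t ht).2.1).continuousAt.continuousWithinAt) ?_
  intro t ht
  rw [interior_Ici] at ht
  have ht' : t ∈ Set.Ici τ₀ := Set.mem_Ici.mpr (le_of_lt ht)
  obtain ⟨h1, h2, h3, h4⟩ := main t ht'
  rw [h2.deriv]
  exact mul_pos h3 (lt_of_lt_of_le h4 h1)
end
end

section
/- Define Z₂ = N₁²·(N̄² − |N×|²)². Along any solution of the tilted Bianchi type VIII dynamical system, Z₂ is differentiable and satisfies Z₂' = 6q·Z₂. -/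
noncomputable section

open Complex Filter

/-- Z₂ = N₁²·(N̄² − |N×|²)². -/
noncomputable def Z2 {γ : ℝ} {I : Set ℝ} (S : BianchiVIII γ I) (τ : ℝ) : ℝ :=
  S.N1 τ ^ 2 * (S.Nb τ ^ 2 - ‖S.Nx τ‖ ^ 2) ^ 2

/-- Along any solution of the tilted Bianchi type VIII system,
Z₂ = N₁²(N̄²−|N×|²)² is differentiable and Z₂' = 6q·Z₂. -/
theorem bianchiVIII_Z2_deriv (γ : ℝ) (hγ0 : 0 < γ) (hγ2 : γ < 2)
    (I : Set ℝ) (S : BianchiVIII γ I) (hsol : S.IsSolution) :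
    ∀ τ ∈ I, HasDerivAt (Z2 S) (6 * S.q τ * Z2 S τ) τ := by

  intro τ hτ
  have hN1 := hsol.hN1 τ hτ
  have hNb := hsol.hNb τ hτ
  have hNx := hsol.hNx τ hτ
  -- real and imaginary parts of Nx
  have hre : HasDerivAt (fun t => (S.Nx t).re)
      ((((S.q τ + 2 * S.Sp τ : ℝ) : ℂ) * S.Nx τ
        + ((2 * Real.sqrt 3 : ℝ) : ℂ) * S.Sx τ * ((S.Nb τ : ℝ) : ℂ)).re) τ :=
    Complex.reCLM.hasFDerivAt.comp_hasDerivAt τ hNx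
  have him : HasDerivAt (fun t => (S.Nx t).im)
      ((((S.q τ + 2 * S.Sp τ : ℝ) : ℂ) * S.Nx τ
        + ((2 * Real.sqrt 3 : ℝ) : ℂ) * S.Sx τ * ((S.Nb τ : ℝ) : ℂ)).im) τ :=
    Complex.imCLM.hasFDerivAt.comp_hasDerivAt τ hNx
  -- the function g = Nb² − |Nx|² written with re/im
  have hg : HasDerivAt (fun t => S.Nb t ^ 2 - ((S.Nx t).re ^ 2 + (S.Nx t).im ^ 2))
      (2 * S.Nb τ * ((S.q τ + 2 * S.Sp τ) * S.Nb τ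
          + 2 * Real.sqrt 3 * ((starRingEnd ℂ) (S.Sx τ) * S.Nx τ).re)
        - (2 * (S.Nx τ).re * (((S.q τ + 2 * S.Sp τ : ℝ) : ℂ) * S.Nx τ
            + ((2 * Real.sqrt 3 : ℝ) : ℂ) * S.Sx τ * ((S.Nb τ : ℝ) : ℂ)).re
          + 2 * (S.Nx τ).im * (((S.q τ + 2 * S.Sp τ : ℝ) : ℂ) * S.Nx τ
            + ((2 * Real.sqrt 3 : ℝ) : ℂ) * S.Sx τ * ((S.Nb τ : ℝ) : ℂ)).im)) τ := by
    have h1 := hNb.fun_pow 2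
    have h2 := (hre.fun_pow 2).fun_add (him.fun_pow 2)
    have := h1.fun_sub h2
    refine this.congr_deriv ?_
    ring
  have hF : HasDerivAt (fun t => S.N1 t ^ 2 * (S.Nb t ^ 2 - ((S.Nx t).re ^ 2 + (S.Nx t).im ^ 2)) ^ 2)
      (2 * S.N1 τ * ((S.q τ - 4 * S.Sp τ) * S.N1 τ)
          * (S.Nb τ ^ 2 - ((S.Nx τ).re ^ 2 + (S.Nx τ).im ^ 2)) ^ 2
        + S.N1 τ ^ 2 * (2 * (S.Nb τ ^ 2 - ((S.Nx τ).re ^ 2 + (S.Nx τ).im ^ 2))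
          * (2 * S.Nb τ * ((S.q τ + 2 * S.Sp τ) * S.Nb τ
              + 2 * Real.sqrt 3 * ((starRingEnd ℂ) (S.Sx τ) * S.Nx τ).re)
            - (2 * (S.Nx τ).re * (((S.q τ + 2 * S.Sp τ : ℝ) : ℂ) * S.Nx τ
                + ((2 * Real.sqrt 3 : ℝ) : ℂ) * S.Sx τ * ((S.Nb τ : ℝ) : ℂ)).re
              + 2 * (S.Nx τ).im * (((S.q τ + 2 * S.Sp τ : ℝ) : ℂ) * S.Nx τ
                + ((2 * Real.sqrt 3 : ℝ) : ℂ) * S.Sx τ * ((S.Nb τ : ℝ) : ℂ)).im)))) τ := by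
    have h1 := hN1.fun_pow 2
    have h2 := hg.fun_pow 2
    have := h1.fun_mul h2
    refine this.congr_deriv ?_
    ring
  have hZeq : Z2 S = fun t => S.N1 t ^ 2 * (S.Nb t ^ 2 - ((S.Nx t).re ^ 2 + (S.Nx t).im ^ 2)) ^ 2 := by
    funext t
    have : ‖S.Nx t‖ ^ 2 = (S.Nx t).re ^ 2 + (S.Nx t).im ^ 2 := by
      rw [Complex.sq_norm, Complex.normSq_apply]; ring
    simp [Z2, this]
  rw [hZeq]
  convert hF using 1
  have habs : ‖S.Nx τ‖ ^ 2 = (S.Nx τ).re ^ 2 + (S.Nx τ).im ^ 2 := by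
    rw [Complex.sq_norm, Complex.normSq_apply]; ring
  simp only [Z2, habs, Complex.add_re, Complex.add_im, Complex.mul_re, Complex.mul_im,
    Complex.ofReal_re, Complex.ofReal_im, Complex.conj_re, Complex.conj_im]
  ring
end
end

section
/- Let 2/3 < γ < 2. Along any type VIII solution of the tilted Bianchi type VIII dynamical system with Ω(τ) > 0 for all τ, one has q > 0 everywhere, and consequently the function Z₂ = N₁²·(N̄² − |N×|²)² is strictly increasing (Z₂' = 6qZ₂ > 0). -/
noncomputable section

open Complex Filter

lemma hasDerivAt_absSq {f : ℝ → ℂ} {f' : ℂ} {τ : ℝ} (h : HasDerivAt f f' τ) :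
    HasDerivAt (fun t => ‖f t‖ ^ 2)
      (2 * (((starRingEnd ℂ) (f τ)) * f').re) τ := by
  have hre : HasDerivAt (fun t => (f t).re) f'.re τ := by
    exact (Complex.reCLM.hasFDerivAt.comp_hasDerivAt τ h)
  have him : HasDerivAt (fun t => (f t).im) f'.im τ := by
    exact (Complex.imCLM.hasFDerivAt.comp_hasDerivAt τ h)
  have heq : (fun t => ‖f t‖ ^ 2) = fun t => (f t).re ^ 2 + (f t).im ^ 2 := by
    funext t; rw [Complex.sq_norm, Complex.normSq_apply]; ring
  rw [heq]
  refine HasDerivAt.congr_deriv ((hre.pow 2).add (him.pow 2)) ?_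
  simp only [Complex.mul_re, Complex.conj_re, Complex.conj_im, pow_one, Nat.cast_ofNat]
  norm_num
  ring

/-- For 2/3 < γ < 2, along any type VIII solution with Ω > 0,
one has q > 0 everywhere, Z₂' = 6qZ₂ > 0, and Z₂ is strictly increasing. -/
theorem bianchiVIII_Z2_strictMono (γ : ℝ) (hγ1 : 2/3 < γ) (hγ2 : γ < 2)
    (τ₀ : ℝ) (S : BianchiVIII γ (Set.Ici τ₀))
    (hsol : S.IsSolution) (hVIII : S.IsTypeVIII)
    (hOm : ∀ τ ∈ Set.Ici τ₀, 0 < S.Om τ) :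
    (∀ τ ∈ Set.Ici τ₀, 0 < S.q τ) ∧
    (∀ τ ∈ Set.Ici τ₀, 0 < 6 * S.q τ * Z2 S τ) ∧
    StrictMonoOn (Z2 S) (Set.Ici τ₀) := by
  have hq : ∀ τ ∈ Set.Ici τ₀, 0 < S.q τ := by
    intro τ hτ
    obtain ⟨h1, h2, h3, h4, h5⟩ := hVIII τ hτ
    have hV2 : 0 ≤ S.V2 τ := by
      have := sq_nonneg (S.v1 τ); have := sq_nonneg (‖S.v τ‖)
      unfold BianchiVIII.V2; positivity
    have hGp : 0 < S.Gp τ := by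
      unfold BianchiVIII.Gp; nlinarith
    have hSig : 0 ≤ S.Sig2 τ := by
      have := sq_nonneg (S.Sp τ); have := sq_nonneg (‖S.Sx τ‖)
      have := sq_nonneg (‖S.S1 τ‖)
      unfold BianchiVIII.Sig2; positivity
    have hOmτ := hOm τ hτ
    unfold BianchiVIII.q
    have hcoef : 0 < (3*γ - 2) + (2 - γ) * S.V2 τ := by nlinarith
    have : 0 < (1/2) * ((3*γ - 2) + (2 - γ) * S.V2 τ) * S.Om τ / S.Gp τ := by
      positivity
    linarith
  have hZpos : ∀ τ ∈ Set.Ici τ₀, 0 < Z2 S τ := by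
    intro τ hτ
    obtain ⟨h1, h2, h3, _, _⟩ := hVIII τ hτ
    have : S.N1 τ ≠ 0 := ne_of_lt h1
    unfold Z2; positivity
  have hZderiv : ∀ τ ∈ Set.Ici τ₀, HasDerivAt (Z2 S) (6 * S.q τ * Z2 S τ) τ := by
    intro τ hτ
    have hN1 := hsol.hN1 τ hτ
    have hNb := hsol.hNb τ hτ
    have hNx := hasDerivAt_absSq (hsol.hNx τ hτ)
    -- derivative of N1^2
    have hA : HasDerivAt (fun t => S.N1 t ^ 2)
        (2 * S.N1 τ ^ 1 * ((S.q τ - 4 * S.Sp τ) * S.N1 τ)) τ := hN1.pow 2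
    -- derivative of (Nb^2 - |Nx|^2)
    have hB : HasDerivAt (fun t => S.Nb t ^ 2 - ‖S.Nx t‖ ^ 2)
        (2 * S.Nb τ ^ 1 * ((S.q τ + 2 * S.Sp τ) * S.Nb τ
            + 2 * Real.sqrt 3 * ((starRingEnd ℂ) (S.Sx τ) * S.Nx τ).re)
          - 2 * (((starRingEnd ℂ) (S.Nx τ)) *
            (((S.q τ + 2 * S.Sp τ : ℝ) : ℂ) * S.Nx τ
              + ((2 * Real.sqrt 3 : ℝ) : ℂ) * S.Sx τ * ((S.Nb τ : ℝ) : ℂ))).re) τ :=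
      (hNb.pow 2).sub hNx
    have hC : HasDerivAt (fun t => (S.Nb t ^ 2 - ‖S.Nx t‖ ^ 2) ^ 2)
        (2 * (S.Nb τ ^ 2 - ‖S.Nx τ‖ ^ 2) ^ 1 *
          (2 * S.Nb τ ^ 1 * ((S.q τ + 2 * S.Sp τ) * S.Nb τ
            + 2 * Real.sqrt 3 * ((starRingEnd ℂ) (S.Sx τ) * S.Nx τ).re)
          - 2 * (((starRingEnd ℂ) (S.Nx τ)) *
            (((S.q τ + 2 * S.Sp τ : ℝ) : ℂ) * S.Nx τ
              + ((2 * Real.sqrt 3 : ℝ) : ℂ) * S.Sx τ * ((S.Nb τ : ℝ) : ℂ))).re)) τ :=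
      hB.pow 2
    have hZ : HasDerivAt (Z2 S) _ τ := hA.mul hC
    convert hZ using 1
    have key : 2 * (((starRingEnd ℂ) (S.Nx τ)) *
            (((S.q τ + 2 * S.Sp τ : ℝ) : ℂ) * S.Nx τ
              + ((2 * Real.sqrt 3 : ℝ) : ℂ) * S.Sx τ * ((S.Nb τ : ℝ) : ℂ))).re
        = 2 * (S.q τ + 2 * S.Sp τ) * ‖S.Nx τ‖ ^ 2
          + 4 * Real.sqrt 3 * S.Nb τ * ((starRingEnd ℂ) (S.Sx τ) * S.Nx τ).re := by
      simp only [Complex.mul_re, Complex.add_re, Complex.add_im, Complex.mul_im,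
        Complex.ofReal_re, Complex.ofReal_im, Complex.conj_re, Complex.conj_im,
        Complex.sq_norm, Complex.normSq_apply]
      ring
    rw [key]
    unfold Z2
    ring
  refine ⟨hq, fun τ hτ => by have := hq τ hτ; have := hZpos τ hτ; positivity, ?_⟩
  · exact strictMonoOn_of_deriv_pos (convex_Ici τ₀)
      (fun x hx => (hZderiv x hx).continuousAt.continuousWithinAt)
      (fun x hx => by
        rw [(hZderiv x (interior_subset hx)).deriv]
        have := hq x (interior_subset hx); have := hZpos x (interior_subset hx)
        positivity)
end
end

section
/- Let 2/3 < γ < 2. The tilted Bianchi type VIII dynamical system has no equilibrium points in the type VIII region: there is no point (Σ₊, Σ×, Σ₁, N×, N̄, N₁, Ω, v₁, v) with N₁ < 0, N̄ > 0, N̄² − |N×|² > 0, Ω ≥ 0 and V² < 1 that satisfies all three constraints and at which all of the right-hand sides of the evolution equations vanish. -/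
set_option maxHeartbeats 1600000


/-- For 2/3 < γ < 2, the tilted Bianchi type VIII dynamical system
has no equilibrium points in the type VIII region: there is no point with
N₁ < 0, N̄ > 0, N̄² − |N×|² > 0, Ω ≥ 0 and V² < 1 satisfying the three
constraints at which all right-hand sides of the evolution equations vanish. -/
theorem bianchiVIII_no_equilibrium (γ : ℝ) (hγ1 : 2/3 < γ) (hγ2 : γ < 2)
    (Sp Nb N1 Om v1 : ℝ) (Sx S1 Nx v : ℂ)
    (Sig2 V2 Gp q W T aa : ℝ) (bb R : ℂ)
    (hSig2 : Sig2 = Sp ^ 2 + ‖Sx‖ ^ 2 + ‖S1‖ ^ 2)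
    (hV2 : V2 = v1 ^ 2 + ‖v‖ ^ 2)
    (hGp : Gp = 1 + (γ - 1) * V2)
    (hq : q = 2 * Sig2 + (1/2) * ((3*γ - 2) + (2 - γ) * V2) * Om / Gp)
    (hW : W = Sp * (-2 * v1 ^ 2 + ‖v‖ ^ 2)
        + 2 * Real.sqrt 3 * v1 * ((starRingEnd ℂ) S1 * v).re
        + Real.sqrt 3 * (Sx * ((starRingEnd ℂ) v) ^ 2).re)
    (hT : T = ((3*γ - 4) * (1 - V2) + (2 - γ) * W) / (1 - (γ - 1) * V2))
    (ha : aa = (Nb ^ 2 - N1 ^ 2 - ‖Nx‖ ^ 2) /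
        ((Nb - N1) ^ 2 - ‖Nx‖ ^ 2))
    (hb : bb = ((-2 * N1 : ℝ) : ℂ) * Nx /
        (((Nb - N1) ^ 2 - ‖Nx‖ ^ 2 : ℝ) : ℂ))
    (hR : R = (aa : ℂ) * S1 + bb * (starRingEnd ℂ) S1)
    -- the type VIII region:
    (hN1 : N1 < 0) (hNb : 0 < Nb) (hVIII : 0 < Nb ^ 2 - ‖Nx‖ ^ 2)
    (hOm : 0 ≤ Om) (hV : V2 < 1)
    -- the constraints:
    (c1 : 1 = Sig2 + (1/4) * N1 ^ 2 - N1 * Nb + ‖Nx‖ ^ 2 + Om)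
    (c2 : 0 = 2 * ((starRingEnd ℂ) Sx * Nx).im + γ * Om * v1 / Gp)
    (c3 : (0 : ℂ) = Complex.I * S1 * ((Nb - N1 : ℝ) : ℂ)
        + Complex.I * (starRingEnd ℂ) S1 * Nx + ((γ * Om / Gp : ℝ) : ℂ) * v)
    -- vanishing of the right-hand sides of the evolution equations:
    (e1 : (q - 2) * Sp + 3 * ((starRingEnd ℂ) R * S1).re - N1 * Nb
        - 2 * ‖Nx‖ ^ 2 + γ * Om / (2 * Gp) * (-2 * v1 ^ 2 + ‖v‖ ^ 2) = 0)
    (e2 : ((q - 2 : ℝ) : ℂ) * Sx + (Real.sqrt 3 : ℂ) * S1 * R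
        - (Real.sqrt 3 : ℂ) * Nx * ((2 * Nb - N1 : ℝ) : ℂ)
        + ((Real.sqrt 3 * γ * Om / (2 * Gp) : ℝ) : ℂ) * v ^ 2 = 0)
    (e3 : ((q - 2 : ℝ) : ℂ) * S1 - ((3 * Sp : ℝ) : ℂ) * R
        - (Real.sqrt 3 : ℂ) * Sx * (starRingEnd ℂ) R
        + ((Real.sqrt 3 * γ * Om * v1 / Gp : ℝ) : ℂ) * v = 0)
    (e4 : ((q + 2 * Sp : ℝ) : ℂ) * Nx + ((2 * Real.sqrt 3 : ℝ) : ℂ) * Sx * (Nb : ℂ) = 0)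
    (e5 : (q + 2 * Sp) * Nb + 2 * Real.sqrt 3 * ((starRingEnd ℂ) Sx * Nx).re = 0)
    (e6 : (q - 4 * Sp) * N1 = 0)
    (e7 : Om / Gp * (2 * q - (3*γ - 2) + (2 * q * (γ - 1) - (2 - γ)) * V2 - γ * W) = 0)
    (e8 : (T + 2 * Sp) * v1 - Real.sqrt 3 * ((R + S1) * (starRingEnd ℂ) v).re
        + Real.sqrt 3 * ((starRingEnd ℂ) Nx * v ^ 2).im = 0)
    (e9 : (((T - Sp : ℝ) : ℂ)
          - Complex.I * (Real.sqrt 3 : ℂ) * ((Nb - N1 : ℝ) : ℂ) * (v1 : ℂ)) * v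
        - (Real.sqrt 3 : ℂ) * (Sx + Complex.I * Nx * (v1 : ℂ)) * (starRingEnd ℂ) v
        - (Real.sqrt 3 : ℂ) * (S1 - R) * (v1 : ℂ) = 0) :
    False := by
  have hV2nn : 0 ≤ V2 := by rw [hV2]; positivity
  have hGp0 : 0 < Gp := by
    rw [hGp]
    linarith only [hV, mul_nonneg (by linarith only [hγ1] : (0:ℝ) ≤ γ) hV2nn]
  -- q = 4 Sp
  have hq4 : q = 4 * Sp := by
    rcases mul_eq_zero.mp e6 with h | h
    · linarith only [h]
    · exact absurd h hN1.ne
  -- component form of e4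
  have h4re := congrArg Complex.re e4
  have h4im := congrArg Complex.im e4
  simp only [Complex.add_re, Complex.add_im, Complex.mul_re, Complex.mul_im,
    Complex.ofReal_re, Complex.ofReal_im, Complex.zero_re, Complex.zero_im,
    mul_zero, zero_mul, sub_zero, zero_sub, add_zero, zero_add, neg_zero] at h4re h4im
  simp only [Complex.mul_re, Complex.conj_re, Complex.conj_im] at e5
  have habsNx : ‖Nx‖ ^ 2 = Nx.re ^ 2 + Nx.im ^ 2 := by
    rw [Complex.sq_norm, Complex.normSq_apply]; ring
  have hk : (q + 2 * Sp) * (Nb ^ 2 - (Nx.re ^ 2 + Nx.im ^ 2)) = 0 := by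
    linear_combination Nb * e5 - Nx.re * h4re - Nx.im * h4im
  have hkz : q + 2 * Sp = 0 := by
    rcases mul_eq_zero.mp hk with h | h
    · exact h
    · rw [habsNx] at hVIII; linarith only [hVIII, h]
  have hSp : Sp = 0 := by linarith only [hq4, hkz]
  have hq0 : q = 0 := by linarith only [hq4, hSp]
  -- Om = 0, Sig2 = 0
  have hSig2nn : 0 ≤ Sig2 := by rw [hSig2]; positivity
  have hc : 0 < (3*γ - 2) + (2 - γ) * V2 := by
    linarith only [hγ1, mul_nonneg (by linarith only [hγ2] : (0:ℝ) ≤ 2 - γ) hV2nn]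
  have hmain : 0 = 2 * Sig2 * Gp + (1/2) * ((3*γ - 2) + (2 - γ) * V2) * Om := by
    have h : (0:ℝ) = 2 * Sig2 + (1/2) * ((3*γ - 2) + (2 - γ) * V2) * Om / Gp := by
      rw [← hq0]; exact hq
    have h2 : (0:ℝ) * Gp = (2 * Sig2 + (1/2) * ((3*γ - 2) + (2 - γ) * V2) * Om / Gp) * Gp := by
      rw [← h]
    rw [zero_mul, add_mul, div_mul_cancel₀ _ hGp0.ne'] at h2
    linarith only [h2]
  have hOm0 : Om = 0 := by
    by_contra h
    have h1 : 0 < Om := lt_of_le_of_ne hOm (Ne.symm h)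
    linarith only [hmain, mul_pos hc h1, mul_nonneg hSig2nn hGp0.le]
  have hSG : Sig2 * Gp = 0 := by
    linear_combination (-(1/2)) * hmain - (1/4) * ((3*γ - 2) + (2 - γ) * V2) * hOm0
  have hSig0 : Sig2 = 0 := by
    rcases mul_eq_zero.mp hSG with h | h
    · exact h
    · exact absurd h hGp0.ne'
  rw [hSig2, hSp] at hSig0
  have hSx0 : Sx = 0 := by
    have hx2 : ‖Sx‖ ^ 2 = 0 := by
      have h1 := sq_nonneg (‖Sx‖)
      have h2 := sq_nonneg (‖S1‖)
      linarith only [hSig0, h1, h2]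
    exact norm_eq_zero.mp ((pow_eq_zero_iff two_ne_zero).mp hx2)
  have hS10 : S1 = 0 := by
    have hx2 : ‖S1‖ ^ 2 = 0 := by
      have h1 := sq_nonneg (‖Sx‖)
      have h2 := sq_nonneg (‖S1‖)
      linarith only [hSig0, h1, h2]
    exact norm_eq_zero.mp ((pow_eq_zero_iff two_ne_zero).mp hx2)
  have hR0 : R = 0 := by rw [hR, hS10]; simp
  -- e2 gives Nx = 0
  rw [hSx0, hS10, hOm0, hq0] at e2
  simp only [mul_zero, zero_mul, zero_add, zero_sub, add_zero, zero_div,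
    Complex.ofReal_zero, neg_eq_zero, neg_add_eq_zero] at e2
  have hs3 : (0:ℝ) < Real.sqrt 3 := Real.sqrt_pos.mpr (by norm_num)
  have hNx0 : Nx = 0 := by
    rcases mul_eq_zero.mp e2 with h | h
    · rcases mul_eq_zero.mp h with h' | h'
      · exact absurd h' (by exact_mod_cast hs3.ne')
      · exact h'
    · exfalso
      have : (2 * Nb - N1 : ℝ) = 0 := by exact_mod_cast h
      linarith only [hNb, hN1, this]
  -- e1 gives contradiction
  rw [hR0, hSp, hOm0, hNx0] at e1
  simp at e1
  rcases e1 with h | h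
  · exact absurd h hN1.ne
  · exact absurd h hNb.ne'
end

section
/- Let N₁, N̄ be real numbers and N× a complex number with N₁ < 0, N̄ > 0 and N̄² − |N×|² > 0. Define a = (N̄² − N₁² − |N×|²)/((N̄−N₁)² − |N×|²) and b = −2N₁N×/((N̄−N₁)² − |N×|²). Then (N̄−N₁)² − |N×|² > 0, |a| ≤ 1 and |b| ≤ 1. -/
/-- For N₁ < 0, N̄ > 0 and N̄² − |N×|² > 0, the denominator
(N̄−N₁)² − |N×|² is positive and the coefficients
a = (N̄²−N₁²−|N×|²)/((N̄−N₁)²−|N×|²) and b = −2N₁N×/((N̄−N₁)²−|N×|²)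
satisfy |a| ≤ 1 and |b| ≤ 1. -/
theorem bianchiVIII_a_b_bounded (N1 Nb : ℝ) (Nx : ℂ)
    (h1 : N1 < 0) (h2 : 0 < Nb) (h3 : 0 < Nb ^ 2 - ‖Nx‖ ^ 2) :
    0 < (Nb - N1) ^ 2 - ‖Nx‖ ^ 2 ∧
    |(Nb ^ 2 - N1 ^ 2 - ‖Nx‖ ^ 2) /
        ((Nb - N1) ^ 2 - ‖Nx‖ ^ 2)| ≤ 1 ∧
    ‖((-2 * N1 : ℝ) : ℂ) * Nx /
        (((Nb - N1) ^ 2 - ‖Nx‖ ^ 2 : ℝ) : ℂ)‖ ≤ 1 := by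
  set x := ‖Nx‖ with hxdef
  have hx0 : 0 ≤ x := norm_nonneg Nx
  have hxNb : x < Nb := by nlinarith
  have hD : 0 < (Nb - N1) ^ 2 - x ^ 2 := by nlinarith
  refine ⟨hD, ?_, ?_⟩
  · rw [abs_div, abs_of_pos hD, div_le_one hD, abs_le]
    constructor <;> nlinarith
  · rw [norm_div, norm_mul, Complex.norm_real, Complex.norm_real, Real.norm_eq_abs, Real.norm_eq_abs,
      abs_of_pos hD, abs_of_pos (by linarith : (0:ℝ) < -2 * N1), div_le_one hD]
    nlinarith
end
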